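/- arXiv:2412.10304 — 6 statements merged into one kernel-verified Lean document; each statement's English description precedes it below -/
import Mathlib

section
/- Let σ > 0, m ∈ ℝ, and let ℓ(y|m,σ) = (2πσ²)^{−1/2} exp(−(y−m)²/(2σ²)) be the N(m,σ²) density. For nonnegative integers j and k, let κ_{jk} = ∫_{−∞}^{∞} [ (∂^j ℓ(y|m,σ)/∂m^j) · (∂^k ℓ(y|m,σ)/∂m^k) / ℓ(y|m,σ) ] dy. Then κ_{jk} = 1{j = k} · j!/σ^{2j}. -/
noncomputable section

/-- The `N(m,σ²)` density `ℓ(y|m,σ) = (2πσ²)^{-1/2} exp(-(y-m)²/(2σ²))`. -/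
def gpdf (m σ y : ℝ) : ℝ :=
  (Real.sqrt (2 * Real.pi * σ ^ 2))⁻¹ * Real.exp (-(y - m) ^ 2 / (2 * σ ^ 2))

namespace Stmt4Aux
open Polynomial MeasureTheory Real Finset

lemma hasDerivAt_hermite_gauss (n : ℕ) (x : ℝ) :
    HasDerivAt (fun x : ℝ => aeval x (hermite n) * Real.exp (-(x ^ 2 / 2)))
      (-(aeval x (hermite (n + 1)) * Real.exp (-(x ^ 2 / 2)))) x := by
  have hp := (hermite n).hasDerivAt_aeval (𝕜 := ℝ) x
  have hi : HasDerivAt (fun x : ℝ => -(x ^ 2 / 2)) (-x) x := by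
    have := ((hasDerivAt_pow 2 x).div_const 2).neg
    exact this.congr_deriv (by norm_num)
  have he := hi.exp
  have := hp.mul he
  refine this.congr_deriv ?_
  rw [hermite_succ]
  simp only [map_sub, map_mul, aeval_X]
  ring

lemma integrable_poly_gauss (p : ℝ[X]) :
    Integrable fun x : ℝ => aeval x p * Real.exp (-(x ^ 2 / 2)) := by
  have hmono : ∀ i : ℕ, Integrable fun x : ℝ => x ^ i * Real.exp (-(x ^ 2 / 2)) := by
    intro i
    have h := integrable_rpow_mul_exp_neg_mul_sq (b := (1:ℝ)/2) (by norm_num)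
      (s := (i:ℝ)) (lt_of_lt_of_le (by norm_num) (Nat.cast_nonneg i))
    have : (fun x : ℝ => x ^ (i:ℝ) * Real.exp (-(1/2 : ℝ) * x ^ 2))
        = fun x : ℝ => x ^ i * Real.exp (-(x ^ 2 / 2)) := by
      funext x
      rw [Real.rpow_natCast]
      ring_nf
    rwa [this] at h
  have : (fun x : ℝ => aeval x p * Real.exp (-(x ^ 2 / 2)))
      = fun x : ℝ => ∑ i ∈ Finset.range (p.natDegree + 1),
          p.coeff i * (x ^ i * Real.exp (-(x ^ 2 / 2))) := by
    funext x
    rw [Polynomial.coe_aeval_eq_eval, Polynomial.eval_eq_sum_range, Finset.sum_mul]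
    simp [mul_assoc]
  rw [this]
  exact integrable_finset_sum _ fun i _ => (hmono i).const_mul _

lemma aeval_int (p : ℤ[X]) (x : ℝ) : aeval x p = eval x (p.map (Int.castRingHom ℝ)) := by
  rw [Polynomial.eval_map, Polynomial.aeval_def]
  rfl

lemma integrable_ipoly_gauss (p : ℤ[X]) :
    Integrable fun x : ℝ => aeval x p * Real.exp (-(x ^ 2 / 2)) := by
  have := integrable_poly_gauss (p.map (algebraMap ℤ ℝ))
  simpa [Polynomial.coe_aeval_eq_eval, aeval_int] using this

lemma key (k : ℕ) (p : ℤ[X]) :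
    (∫ x : ℝ, aeval x p * (aeval x (hermite k) * Real.exp (-(x ^ 2 / 2))))
      = ∫ x : ℝ, aeval x (derivative^[k] p) * Real.exp (-(x ^ 2 / 2)) := by
  induction k generalizing p with
  | zero => simp [hermite_zero]
  | succ k ih =>
    have hu : ∀ x : ℝ, HasDerivAt (fun x : ℝ => aeval x p) (aeval x (derivative p)) x := by
      intro x
      have := (p.map (Int.castRingHom ℝ)).hasDerivAt_aeval (𝕜 := ℝ) x
      simpa [Polynomial.coe_aeval_eq_eval, aeval_int, Polynomial.derivative_map] using this
    have hv : ∀ x : ℝ, HasDerivAt (fun x : ℝ => -(aeval x (hermite k) * Real.exp (-(x ^ 2 / 2))))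
        (aeval x (hermite (k + 1)) * Real.exp (-(x ^ 2 / 2))) x :=
      fun x => (hasDerivAt_hermite_gauss k x).neg.congr_deriv (by rw [neg_neg])
    have huv' : Integrable ((fun x : ℝ => aeval x p) *
        fun x : ℝ => aeval x (hermite (k + 1)) * Real.exp (-(x ^ 2 / 2))) := by
      apply (integrable_ipoly_gauss (p * hermite (k + 1))).congr
      filter_upwards with x
      simp only [Pi.mul_apply, map_mul]
      ring
    have hu'v : Integrable ((fun x : ℝ => aeval x (derivative p)) *
        fun x : ℝ => -(aeval x (hermite k) * Real.exp (-(x ^ 2 / 2)))) := by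
      apply (integrable_ipoly_gauss (derivative p * hermite k)).neg.congr
      filter_upwards with x
      simp only [Pi.mul_apply, Pi.neg_apply, map_mul]
      ring
    have huv : Integrable ((fun x : ℝ => aeval x p) *
        fun x : ℝ => -(aeval x (hermite k) * Real.exp (-(x ^ 2 / 2)))) := by
      apply (integrable_ipoly_gauss (p * hermite k)).neg.congr
      filter_upwards with x
      simp only [Pi.mul_apply, Pi.neg_apply, map_mul]
      ring
    have hibp := MeasureTheory.integral_mul_deriv_eq_deriv_mul_of_integrable (fun x _ => hu x) (fun x _ => hv x) huv' hu'v huv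
    rw [hibp]
    have : (∫ x : ℝ, aeval x (derivative p) *
        -(aeval x (hermite k) * Real.exp (-(x ^ 2 / 2))))
        = -∫ x : ℝ, aeval x (derivative p) * (aeval x (hermite k) * Real.exp (-(x ^ 2 / 2))) := by
      rw [← integral_neg]; congr 1; funext x; ring
    rw [this, neg_neg, ih (derivative p), Function.iterate_succ_apply]

lemma gauss_int : (∫ x : ℝ, Real.exp (-(x ^ 2 / 2))) = Real.sqrt (2 * π) := by
  have h := integral_gaussian (1/2)
  have h2 : (fun x : ℝ => Real.exp (-(1/2 : ℝ) * x ^ 2)) = fun x : ℝ => Real.exp (-(x ^ 2 / 2)) := by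
    funext x; ring_nf
  rw [h2] at h
  rw [h]
  congr 1
  ring

lemma iterate_derivative_hermite_self (j : ℕ) :
    derivative^[j] (hermite j) = C ((Nat.factorial j : ℤ)) := by
  have hdeg : (derivative^[j] (hermite j)).natDegree = 0 := by
    have := Polynomial.natDegree_iterate_derivative (hermite j) j
    simp only [Polynomial.natDegree_hermite] at this
    omega
  have h := Polynomial.eq_C_of_natDegree_le_zero (le_of_eq hdeg)
  rw [h]
  congr 1
  rw [Polynomial.coeff_iterate_derivative]
  simp [Polynomial.coeff_hermite_self, Nat.descFactorial_self]

lemma herm_orth (j k : ℕ) :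
    (∫ x : ℝ, aeval x (hermite j) * aeval x (hermite k) * Real.exp (-(x ^ 2 / 2)))
      = if j = k then (Nat.factorial j : ℝ) * Real.sqrt (2 * π) else 0 := by
  rcases lt_trichotomy j k with h | h | h
  · rw [if_neg h.ne]
    have hk := key k (hermite j)
    rw [Polynomial.iterate_derivative_eq_zero (by simpa [Polynomial.natDegree_hermite] using h)]
      at hk
    simp only [map_zero, zero_mul, integral_zero] at hk
    rw [← hk]
    congr 1; funext x; ring
  · subst h
    rw [if_pos rfl]
    have hk := key j (hermite j)
    rw [iterate_derivative_hermite_self] at hk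
    have h2 : (∫ x : ℝ, aeval x (C ((Nat.factorial j : ℤ))) * Real.exp (-(x ^ 2 / 2)))
        = (Nat.factorial j : ℝ) * Real.sqrt (2 * π) := by
      simp only [aeval_C]
      push_cast
      rw [integral_const_mul, gauss_int]
    rw [← h2, ← hk]
    congr 1; funext x; ring
  · rw [if_neg h.ne']
    have hk := key j (hermite k)
    rw [Polynomial.iterate_derivative_eq_zero (by simpa [Polynomial.natDegree_hermite] using h)]
      at hk
    simp only [map_zero, zero_mul, integral_zero] at hk
    rw [← hk]
    congr 1; funext x; ring

lemma shift_scale (σ : ℝ) (hσ : 0 < σ) (m : ℝ) (F : ℝ → ℝ) :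
    (∫ y : ℝ, F ((y - m) / σ)) = σ * ∫ x : ℝ, F x := by
  have h1 := MeasureTheory.integral_sub_right_eq_self (μ := volume) (fun u : ℝ => F (u / σ)) m
  have h2 := MeasureTheory.Measure.integral_comp_div F σ
  rw [h1, h2, smul_eq_mul, abs_of_pos hσ]


lemma exp_arg_eq (σ : ℝ) (hσ : 0 < σ) (u : ℝ) :
    -u ^ 2 / (2 * σ ^ 2) = -((u / σ) ^ 2 / 2) := by
  rw [div_pow, div_div]
  ring

lemma iter_gpdf (σ : ℝ) (hσ : 0 < σ) (y : ℝ) (n : ℕ) (m : ℝ) :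
    iteratedDeriv n (fun m' => gpdf m' σ y) m
      = (Real.sqrt (2 * Real.pi * σ ^ 2))⁻¹ *
        ((σ⁻¹) ^ n * (aeval ((y - m) / σ) (hermite n)
          * Real.exp (-(((y - m) / σ) ^ 2 / 2)))) := by
  induction n generalizing m with
  | zero =>
    simp only [iteratedDeriv_zero, pow_zero, one_mul, hermite_zero, map_one, gpdf]
    rw [exp_arg_eq σ hσ]
  | succ n ih =>
    rw [iteratedDeriv_succ]
    have hfun : iteratedDeriv n (fun m' => gpdf m' σ y)
        = fun m => (Real.sqrt (2 * Real.pi * σ ^ 2))⁻¹ *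
          ((σ⁻¹) ^ n * (aeval ((y - m) / σ) (hermite n)
            * Real.exp (-(((y - m) / σ) ^ 2 / 2)))) := funext fun m => ih m
    rw [hfun]
    have ht : HasDerivAt (fun m : ℝ => (y - m) / σ) (-σ⁻¹) m := by
      have := ((hasDerivAt_id m).const_sub y).div_const σ
      simpa [neg_div, one_div] using this
    have hcomp : HasDerivAt
        (fun m : ℝ => aeval ((y - m) / σ) (hermite n) * Real.exp (-(((y - m) / σ) ^ 2 / 2)))
        (-(aeval ((y - m) / σ) (hermite (n + 1))
            * Real.exp (-(((y - m) / σ) ^ 2 / 2))) * -σ⁻¹) m :=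
      by have := (hasDerivAt_hermite_gauss n ((y - m) / σ)).comp m ht; exact this
    have hfull := (hcomp.const_mul ((σ⁻¹ : ℝ) ^ n)).const_mul
      ((Real.sqrt (2 * Real.pi * σ ^ 2))⁻¹)
    rw [hfull.deriv, pow_succ]
    ring

end Stmt4Aux

open Stmt4Aux Polynomial MeasureTheory Real in
/-- **Orthogonality of the Bhattacharyya basis for the normal location family.**
For `Y ∼ N(m,σ²)` and nonnegative integers `j, k`,
`κ_{jk} = ∫ (∂ʲℓ/∂mʲ)(∂ᵏℓ/∂mᵏ)/ℓ dy = 1{j = k} · j!/σ^{2j}`. -/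
theorem stmt4 (m σ : ℝ) (hσ : 0 < σ) (j k : ℕ) :
    (∫ y : ℝ, iteratedDeriv j (fun m' => gpdf m' σ y) m
        * iteratedDeriv k (fun m' => gpdf m' σ y) m / gpdf m σ y)
    = if j = k then (Nat.factorial j : ℝ) / σ ^ (2 * j) else 0 := by
  set c : ℝ := (Real.sqrt (2 * Real.pi * σ ^ 2))⁻¹ with hc
  have hcpos : 0 < Real.sqrt (2 * Real.pi * σ ^ 2) :=
    Real.sqrt_pos.mpr (by positivity)
  have hcne : c ≠ 0 := by
    rw [hc]; exact inv_ne_zero hcpos.ne'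
  have hA : ∀ y : ℝ, iteratedDeriv j (fun m' => gpdf m' σ y) m
        * iteratedDeriv k (fun m' => gpdf m' σ y) m / gpdf m σ y
      = (c * σ⁻¹ ^ (j + k)) *
        (aeval ((y - m) / σ) (hermite j) * aeval ((y - m) / σ) (hermite k)
          * Real.exp (-(((y - m) / σ) ^ 2 / 2))) := by
    intro y
    rw [iter_gpdf σ hσ y j m, iter_gpdf σ hσ y k m]
    have hg : gpdf m σ y = c * Real.exp (-(((y - m) / σ) ^ 2 / 2)) := by
      rw [gpdf, exp_arg_eq σ hσ, hc]
    rw [hg]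
    have hexp : Real.exp (-(((y - m) / σ) ^ 2 / 2)) ≠ 0 := Real.exp_ne_zero _
    rw [div_eq_iff (mul_ne_zero hcne hexp), pow_add]
    ring
  simp_rw [hA]
  rw [MeasureTheory.integral_const_mul]
  rw [shift_scale σ hσ m (fun x => aeval x (hermite j) * aeval x (hermite k)
      * Real.exp (-(x ^ 2 / 2)))]
  rw [herm_orth j k]
  by_cases hjk : j = k
  · subst hjk
    rw [if_pos rfl, if_pos rfl]
    have hs : Real.sqrt (2 * Real.pi * σ ^ 2) = Real.sqrt (2 * Real.pi) * σ := by
      rw [Real.sqrt_mul (by positivity), Real.sqrt_sq hσ.le]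
    have hsp : (0:ℝ) < Real.sqrt (2 * Real.pi) := Real.sqrt_pos.mpr (by positivity)
    rw [hc, hs]
    rw [show σ⁻¹ ^ (j + j) = (σ ^ (2 * j))⁻¹ by rw [inv_pow, two_mul]]
    field_simp
  · rw [if_neg hjk, if_neg hjk]
    ring

end
end

section
/- Let σ > 0, m ∈ ℝ, and let ℓ(y|m,σ) = (2πσ²)^{−1/2} exp(−(y−m)²/(2σ²)) be the N(m,σ²) density. For a nonnegative integer j, let ρ_j = ∫_{−∞}^{∞} [ (∂^j ℓ(y|m,σ)/∂m^j) / ℓ(y|m,σ) ] · [ ∂ log ℓ(y|m,σ)/∂σ ] · ℓ(y|m,σ) dy. Then ρ_j = 1{j = 2} · 2/σ³. -/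
noncomputable section

namespace Stmt5Aux
open Polynomial MeasureTheory Filter Real


def g (x : ℝ) : ℝ := Real.exp (-(x ^ 2 / 2))

lemma abs_pow_mul_g_le (n : ℕ) (x : ℝ) :
    |x ^ n * g x| ≤ (1 + n.factorial * 4 ^ n) * Real.exp (-(x ^ 2 / 4)) := by
  have h1 : |x| ^ n ≤ 1 + (x ^ 2) ^ n := by
    rcases le_or_gt |x| 1 with h | h
    · have h' : |x| ^ n ≤ 1 := pow_le_one₀ (abs_nonneg x) h
      have : (0:ℝ) ≤ (x ^ 2) ^ n := by positivity
      linarith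
    · have hx2 : |x| ≤ x ^ 2 := by nlinarith [abs_nonneg x, sq_abs x]
      have : |x| ^ n ≤ (x ^ 2) ^ n := pow_le_pow_left₀ (abs_nonneg x) hx2 n
      linarith
  have h2 : (x ^ 2) ^ n ≤ n.factorial * 4 ^ n * Real.exp (x ^ 2 / 4) := by
    have h := Real.pow_div_factorial_le_exp (x := x ^ 2 / 4) (by positivity) n
    rw [div_pow, div_div, div_le_iff₀ (by positivity)] at h
    calc (x ^ 2) ^ n ≤ Real.exp (x ^ 2 / 4) * (4 ^ n * n.factorial) := h
      _ = n.factorial * 4 ^ n * Real.exp (x ^ 2 / 4) := by ring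
  have key : |x| ^ n * Real.exp (-(x ^ 2 / 2))
      ≤ (1 + n.factorial * 4 ^ n) * Real.exp (-(x ^ 2 / 4)) := by
    have e1 : Real.exp (-(x ^ 2 / 2)) ≤ Real.exp (-(x ^ 2 / 4)) := by
      apply Real.exp_le_exp.2; nlinarith [sq_nonneg x]
    have e2 : Real.exp (x ^ 2 / 4) * Real.exp (-(x ^ 2 / 2)) = Real.exp (-(x ^ 2 / 4)) := by
      rw [← Real.exp_add]; ring_nf
    have step : |x| ^ n * Real.exp (-(x ^ 2 / 2))
        ≤ (1 + (x ^ 2) ^ n) * Real.exp (-(x ^ 2 / 2)) :=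
      mul_le_mul_of_nonneg_right h1 (Real.exp_pos _).le
    have step2 : (1 + (x ^ 2) ^ n) * Real.exp (-(x ^ 2 / 2))
        ≤ Real.exp (-(x ^ 2 / 4)) + n.factorial * 4 ^ n * Real.exp (-(x ^ 2 / 4)) := by
      rw [add_mul, one_mul]
      refine add_le_add e1 ?_
      calc (x ^ 2) ^ n * Real.exp (-(x ^ 2 / 2))
          ≤ n.factorial * 4 ^ n * Real.exp (x ^ 2 / 4) * Real.exp (-(x ^ 2 / 2)) :=
            mul_le_mul_of_nonneg_right h2 (Real.exp_pos _).le
        _ = n.factorial * 4 ^ n * Real.exp (-(x ^ 2 / 4)) := by rw [mul_assoc, e2]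
    calc |x| ^ n * Real.exp (-(x ^ 2 / 2)) ≤ _ := step
      _ ≤ _ := step2
      _ = (1 + n.factorial * 4 ^ n) * Real.exp (-(x ^ 2 / 4)) := by ring
  calc |x ^ n * g x| = |x| ^ n * Real.exp (-(x ^ 2 / 2)) := by
        rw [abs_mul, abs_pow, g, Real.abs_exp]
    _ ≤ _ := key

lemma integrable_aux : Integrable (fun x : ℝ => Real.exp (-(x ^ 2 / 4))) := by
  have : Integrable (fun x : ℝ => Real.exp (-(4:ℝ)⁻¹ * x ^ 2)) :=
    integrable_exp_neg_mul_sq (by norm_num)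
  refine this.congr (Eventually.of_forall fun x => by ring_nf)

lemma integrable_pow_mul_g (n : ℕ) : Integrable (fun x : ℝ => x ^ n * g x) := by
  refine Integrable.mono' ((integrable_aux).const_mul (1 + n.factorial * 4 ^ n)) ?_
    (Eventually.of_forall fun x => ?_)
  · exact ((continuous_pow n).mul (Real.continuous_exp.comp (by continuity))).aestronglyMeasurable
  · rw [Real.norm_eq_abs]; exact abs_pow_mul_g_le n x

lemma tendsto_pow_mul_g {l : Filter ℝ} (hl : Tendsto (fun x : ℝ => x ^ 2) l atTop) (n : ℕ) :
    Tendsto (fun x => x ^ n * g x) l (nhds 0) := by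
  have hb : Tendsto (fun x : ℝ => (1 + (n.factorial : ℝ) * 4 ^ n) * Real.exp (-(x ^ 2 / 4)))
      l (nhds 0) := by
    have h4 : Tendsto (fun x : ℝ => -(x ^ 2 / 4)) l atBot := by
      apply Filter.tendsto_neg_atBot_iff.mpr
      exact Tendsto.atTop_div_const (by norm_num) hl
    have := (Real.tendsto_exp_atBot).comp h4
    simpa using this.const_mul (1 + (n.factorial : ℝ) * 4 ^ n)
  exact squeeze_zero_norm (fun x => by rw [Real.norm_eq_abs]; exact abs_pow_mul_g_le n x) hb


lemma integrable_poly_mul_g (P : ℝ[X]) : Integrable (fun x : ℝ => aeval x P * g x) := by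
  have : (fun x : ℝ => aeval x P * g x) =
      fun x => ∑ i ∈ Finset.range (P.natDegree + 1), P.coeff i * (x ^ i * g x) := by
    funext x
    rw [Polynomial.aeval_eq_sum_range, Finset.sum_mul]
    simp [mul_assoc, smul_eq_mul]
  rw [this]
  exact integrable_finset_sum _ fun i _ => (integrable_pow_mul_g i).const_mul _

lemma tendsto_poly_mul_g {l : Filter ℝ} (hl : Tendsto (fun x : ℝ => x ^ 2) l atTop)
    (P : ℝ[X]) : Tendsto (fun x => aeval x P * g x) l (nhds 0) := by
  have : (fun x : ℝ => aeval x P * g x) =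
      fun x => ∑ i ∈ Finset.range (P.natDegree + 1), P.coeff i * (x ^ i * g x) := by
    funext x
    rw [Polynomial.aeval_eq_sum_range, Finset.sum_mul]
    simp [mul_assoc, smul_eq_mul]
  rw [this]
  have : Tendsto (fun x : ℝ => ∑ i ∈ Finset.range (P.natDegree + 1), P.coeff i * (x ^ i * g x))
      l (nhds (∑ i ∈ Finset.range (P.natDegree + 1), P.coeff i * 0)) :=
    tendsto_finset_sum _ fun i _ => ((tendsto_pow_mul_g hl i).const_mul _)
  simpa using this

lemma sq_tendsto_atTop : Tendsto (fun x : ℝ => x ^ 2) atTop atTop :=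
  tendsto_pow_atTop (by norm_num)

lemma sq_tendsto_atBot : Tendsto (fun x : ℝ => x ^ 2) atBot atTop := by
  have : Tendsto (fun x : ℝ => (-x) ^ 2) atBot atTop :=
    sq_tendsto_atTop.comp tendsto_neg_atBot_atTop
  simpa using this

lemma hasDerivAt_g (x : ℝ) : HasDerivAt g (-x * g x) x := by
  have h : HasDerivAt (fun x : ℝ => -(x ^ 2 / 2)) (-x) x := by
    have := (hasDerivAt_pow 2 x).div_const 2
    exact this.neg.congr_deriv (by norm_num)
  have := h.exp
  rw [show Real.exp (-(x ^ 2 / 2)) * -x = -x * g x by rw [g]; ring] at this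
  exact this

lemma hasDerivAt_poly_mul_g (P : ℝ[X]) (x : ℝ) :
    HasDerivAt (fun x => aeval x P * g x)
      (aeval x (derivative P - X * P) * g x) x := by
  have h := (P.hasDerivAt_aeval x).mul (hasDerivAt_g x)
  refine h.congr_deriv ?_
  simp [Polynomial.aeval_X]
  ring

lemma iter_deriv_g (k : ℕ) :
    deriv^[k] g = fun x => (-1 : ℝ) ^ k * aeval x (hermite k) * g x := by
  funext x
  exact Polynomial.deriv_gaussian_eq_hermite_mul_gaussian k x

def Hk (k : ℕ) : ℝ[X] := (hermite k).map (algebraMap ℤ ℝ)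

lemma aeval_Hk (k : ℕ) (x : ℝ) : aeval x (Hk k) = aeval x (hermite k) := by
  rw [Hk, Polynomial.aeval_map_algebraMap]

lemma Hk_succ (k : ℕ) : Hk (k + 1) = X * Hk k - derivative (Hk k) := by
  rw [Hk, hermite_succ, Polynomial.map_sub, Polynomial.map_mul, Polynomial.map_X,
    ← Polynomial.derivative_map, Hk]

lemma iter_deriv_g' (k : ℕ) :
    deriv^[k] g = fun x => (-1 : ℝ) ^ k * aeval x (Hk k) * g x := by
  rw [iter_deriv_g k]; funext x; rw [aeval_Hk]

lemma hasDerivAt_iter_g (k : ℕ) (x : ℝ) :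
    HasDerivAt (deriv^[k] g) (deriv^[k + 1] g x) x := by
  rw [iter_deriv_g' k, iter_deriv_g' (k + 1)]
  have h := (hasDerivAt_poly_mul_g (Hk k) x).const_mul ((-1 : ℝ) ^ k)
  have hfun : (fun x => (-1 : ℝ) ^ k * (aeval x (Hk k) * g x))
      = fun x => (-1 : ℝ) ^ k * aeval x (Hk k) * g x := by
    funext y; ring
  rw [hfun] at h
  refine h.congr_deriv ?_
  rw [Hk_succ]
  simp only [map_sub, map_mul, Polynomial.aeval_X, pow_succ]
  ring


lemma integral_deriv_zero (F F' : ℝ → ℝ) (hF : ∀ x, HasDerivAt F (F' x) x)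
    (hint : Integrable F') (htop : Tendsto F atTop (nhds 0))
    (hbot : Tendsto F atBot (nhds 0)) : ∫ x, F' x = 0 := by
  have h1 : ∫ x in Set.Ioi (0:ℝ), F' x = 0 - F 0 :=
    integral_Ioi_of_hasDerivAt_of_tendsto' (fun x _ => hF x) hint.integrableOn htop
  have h2 : ∫ x in Set.Iic (0:ℝ), F' x = F 0 - 0 :=
    integral_Iic_of_hasDerivAt_of_tendsto' (fun x _ => hF x) hint.integrableOn hbot
  rw [← intervalIntegral.integral_Iic_add_Ioi hint.integrableOn hint.integrableOn, h1, h2]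
  ring

/-- Integration by parts against iterated derivatives of the Gaussian. -/
lemma ibp (P : ℝ[X]) (k : ℕ) :
    ∫ x, aeval x P * deriv^[k + 1] g x
      = - ∫ x, aeval x (derivative P) * deriv^[k] g x := by
  -- F = P * deriv^[k] g
  set F : ℝ → ℝ := fun x => aeval x P * deriv^[k] g x with hFdef
  have hF : ∀ x, HasDerivAt F
      (aeval x (derivative P) * deriv^[k] g x + aeval x P * deriv^[k + 1] g x) x := by
    intro x
    exact (P.hasDerivAt_aeval x).mul (hasDerivAt_iter_g k x)
  have eq1 : ∀ (Q : ℝ[X]) (j : ℕ), (fun x => aeval x Q * deriv^[j] g x)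
      = fun x => (-1 : ℝ) ^ j * (aeval x (Q * Hk j) * g x) := by
    intro Q j
    funext x
    rw [iter_deriv_g' j, map_mul]
    ring
  have hint1 : Integrable (fun x => aeval x (derivative P) * deriv^[k] g x) := by
    rw [eq1]
    exact (integrable_poly_mul_g _).const_mul _
  have hint2 : Integrable (fun x => aeval x P * deriv^[k + 1] g x) := by
    rw [eq1]
    exact (integrable_poly_mul_g _).const_mul _
  have hFeq : F = fun x => (-1 : ℝ) ^ k * (aeval x (P * Hk k) * g x) := by
    rw [hFdef, eq1]
  have htop : Tendsto F atTop (nhds 0) := by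
    rw [hFeq]
    simpa using ((tendsto_poly_mul_g sq_tendsto_atTop (P * Hk k)).const_mul ((-1:ℝ)^k))
  have hbot : Tendsto F atBot (nhds 0) := by
    rw [hFeq]
    simpa using ((tendsto_poly_mul_g sq_tendsto_atBot (P * Hk k)).const_mul ((-1:ℝ)^k))
  have h0 : ∫ x, (aeval x (derivative P) * deriv^[k] g x + aeval x P * deriv^[k + 1] g x) = 0 :=
    integral_deriv_zero F _ hF (hint1.add hint2) htop hbot
  rw [integral_add hint1 hint2] at h0
  linarith

/-- Orthogonality-type vanishing: low-degree polynomials against high derivatives. -/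
lemma integral_poly_iter_deriv_zero : ∀ (k : ℕ) (P : ℝ[X]), P.natDegree ≤ k →
    ∫ x, aeval x P * deriv^[k + 1] g x = 0 := by
  intro k
  induction k with
  | zero =>
    intro P hP
    rw [ibp]
    have : derivative P = 0 := by
      rw [Polynomial.eq_C_of_natDegree_le_zero hP]
      simp
    simp [this]
  | succ k ih =>
    intro P hP
    rw [ibp, ih (derivative P) ?_, neg_zero]
    exact le_trans (Polynomial.natDegree_derivative_le P) (by omega)

lemma integral_g : ∫ x, g x = Real.sqrt (2 * Real.pi) := by
  have h := integral_gaussian (1/2 : ℝ)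
  rw [show ((fun x : ℝ => Real.exp (-(1/2:ℝ) * x ^ 2)) = g) from funext fun x => by
    rw [g]; ring_nf] at h
  rw [h]
  norm_num [mul_comm]


lemma natDegree_Hk_le (j : ℕ) : (Hk j).natDegree ≤ j := by
  rw [Hk]
  exact le_trans Polynomial.natDegree_map_le (le_of_eq Polynomial.natDegree_hermite)

lemma Hk_two : Hk 2 = X ^ 2 - C 1 := by
  have h0 : Hk 0 = 1 := by rw [Hk, hermite_zero]; simp
  have h1 : Hk 1 = X := by
    rw [show (1:ℕ) = 0 + 1 from rfl, Hk_succ, h0]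
    simp
  rw [show (2:ℕ) = 1 + 1 from rfl, Hk_succ, h1]
  simp [sq]

lemma Kval (j : ℕ) :
    ∫ x, aeval x (Hk j) * deriv^[2] g x
      = if j = 2 then 2 * Real.sqrt (2 * Real.pi) else 0 := by
  rcases lt_trichotomy j 2 with hj | hj | hj
  · rw [if_neg (by omega)]
    exact integral_poly_iter_deriv_zero 1 (Hk j) (le_trans (natDegree_Hk_le j) (by omega))
  · subst hj
    rw [if_pos rfl]
    have e1 := ibp (Hk 2) 1
    have e2 := ibp (derivative (Hk 2)) 0
    rw [e1, e2, neg_neg]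
    have hdd : derivative (derivative (Hk 2)) = C 2 := by
      rw [Hk_two]
      simp [Polynomial.derivative_X_pow]
      rw [show (2:ℝ) = 1 + 1 by norm_num, C_add, C_1]
    rw [hdd]
    simp only [Polynomial.aeval_C, Function.iterate_zero_apply, id_eq]
    rw [show ((algebraMap ℝ ℝ) 2 : ℝ) = (2:ℝ) by simp]
    rw [MeasureTheory.integral_const_mul, integral_g]
  · rw [if_neg (by omega)]
    have key : (fun x => aeval x (Hk j) * deriv^[2] g x)
        = fun x => (-1:ℝ)^j * (aeval x (X^2 - C 1 : ℝ[X]) * deriv^[j] g x) := by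
      funext x
      rw [iter_deriv_g' 2, Hk_two, iter_deriv_g' j]
      ring_nf
      rw [pow_mul, show ((-1:ℝ)^j)^2 = ((-1)^2)^j by rw [← pow_mul, ← pow_mul, Nat.mul_comm]]
      norm_num
    rw [key, MeasureTheory.integral_const_mul]
    obtain ⟨k, rfl⟩ : ∃ k, j = k + 1 := ⟨j - 1, by omega⟩
    rw [integral_poly_iter_deriv_zero k _ ?_, mul_zero]
    calc (X^2 - C 1 : ℝ[X]).natDegree ≤ 2 := by
          apply le_trans (Polynomial.natDegree_sub_le _ _)
          simp [Polynomial.natDegree_X_pow]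
      _ ≤ k := by omega



lemma gpdf_eq {σ : ℝ} (hσ : 0 < σ) (m y : ℝ) :
    gpdf m σ y = (Real.sqrt (2 * Real.pi * σ ^ 2))⁻¹ * g ((y - m) / σ) := by
  rw [gpdf, g]
  congr 1
  rw [div_pow, neg_div]
  congr 1
  rw [div_div]
  ring_nf

lemma gpdf_pos {σ : ℝ} (hσ : 0 < σ) (m y : ℝ) : 0 < gpdf m σ y := by
  rw [gpdf]
  have : 0 < Real.sqrt (2 * Real.pi * σ ^ 2) :=
    Real.sqrt_pos.mpr (by positivity)
  positivity

lemma hasDerivAt_inner {σ : ℝ} (hσ : 0 < σ) (y t : ℝ) :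
    HasDerivAt (fun t : ℝ => (y - t) / σ) (-(1 / σ)) t := by
  have h : HasDerivAt (fun t : ℝ => y - t) (-1) t := by
    simpa using (hasDerivAt_id t).const_sub y
  have := h.div_const σ
  rw [show (-1:ℝ)/σ = -(1/σ) by ring] at this
  exact this

lemma iterDeriv_gpdf {σ : ℝ} (hσ : 0 < σ) (y : ℝ) (j : ℕ) (m : ℝ) :
    iteratedDeriv j (fun m' => gpdf m' σ y) m
      = (-(1 / σ)) ^ j * ((Real.sqrt (2 * Real.pi * σ ^ 2))⁻¹
          * deriv^[j] g ((y - m) / σ)) := by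
  induction j generalizing m with
  | zero => simp [gpdf_eq hσ]
  | succ j ih =>
    rw [iteratedDeriv_succ]
    have hfun : iteratedDeriv j (fun m' => gpdf m' σ y)
        = fun t => (-(1 / σ)) ^ j * ((Real.sqrt (2 * Real.pi * σ ^ 2))⁻¹
            * deriv^[j] g ((y - t) / σ)) := funext fun t => ih t
    rw [hfun]
    have hd : HasDerivAt (fun t => (-(1 / σ)) ^ j * ((Real.sqrt (2 * Real.pi * σ ^ 2))⁻¹
          * deriv^[j] g ((y - t) / σ)))
        ((-(1 / σ)) ^ (j+1) * ((Real.sqrt (2 * Real.pi * σ ^ 2))⁻¹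
          * deriv^[j+1] g ((y - m) / σ))) m := by
      have hcomp : HasDerivAt (fun t : ℝ => deriv^[j] g ((y - t) / σ))
          (deriv^[j+1] g ((y - m) / σ) * (-(1 / σ))) m :=
        (hasDerivAt_iter_g j ((y - m) / σ)).comp m (hasDerivAt_inner hσ y m)
      have := (hcomp.const_mul ((Real.sqrt (2 * Real.pi * σ ^ 2))⁻¹)).const_mul
        ((-(1 / σ)) ^ j)
      refine this.congr_deriv ?_
      rw [pow_succ]
      ring
    exact hd.deriv

lemma sign_cancel {σ : ℝ} (j : ℕ) : (-(1/σ):ℝ)^j * (-1:ℝ)^j = (1/σ)^j := by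
  rw [← mul_pow]; norm_num

lemma deriv_log_gpdf {σ : ℝ} (hσ : 0 < σ) (m y : ℝ) :
    deriv (fun σ' => Real.log (gpdf m σ' y)) σ = (y - m) ^ 2 / σ ^ 3 - 1 / σ := by
  have heq : (fun σ' => Real.log (gpdf m σ' y)) =ᶠ[nhds σ]
      fun σ' => -Real.log (Real.sqrt (2 * Real.pi)) - Real.log σ'
        - (y - m) ^ 2 / 2 * (σ' ^ 2)⁻¹ := by
    filter_upwards [eventually_gt_nhds hσ] with σ' hσ'
    rw [gpdf]
    have hsqrt : Real.sqrt (2 * Real.pi * σ' ^ 2) = Real.sqrt (2 * Real.pi) * σ' := by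
      rw [Real.sqrt_mul (by positivity), Real.sqrt_sq hσ'.le]
    have h1 : (0:ℝ) < Real.sqrt (2 * Real.pi) := Real.sqrt_pos.mpr (by positivity)
    rw [Real.log_mul (by positivity) (Real.exp_pos _).ne', Real.log_exp, hsqrt,
      Real.log_inv, Real.log_mul h1.ne' hσ'.ne']
    field_simp
    ring
  rw [heq.deriv_eq]
  have h2 : HasDerivAt (fun σ' : ℝ => -Real.log (Real.sqrt (2 * Real.pi)) - Real.log σ'
      - (y - m) ^ 2 / 2 * (σ' ^ 2)⁻¹) ((y - m) ^ 2 / σ ^ 3 - 1 / σ) σ := by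
    have ha : HasDerivAt (fun σ' : ℝ => Real.log σ') σ⁻¹ σ := Real.hasDerivAt_log hσ.ne'
    have hb : HasDerivAt (fun σ' : ℝ => (σ' ^ 2)⁻¹) (-(2 * σ) / (σ ^ 2) ^ 2) σ := by
      have := (hasDerivAt_pow 2 σ).inv (by positivity)
      exact this.congr_deriv (by norm_num)
    have := ((hasDerivAt_const σ (-Real.log (Real.sqrt (2 * Real.pi)))).sub ha).sub
      (hb.const_mul ((y - m) ^ 2 / 2))
    refine this.congr_deriv ?_
    field_simp
    ring
  exact h2.deriv

end Stmt5Aux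

open Stmt5Aux Polynomial MeasureTheory in
/-- **Cross moment of the Bhattacharyya basis with the scale score.**
For `Y ∼ N(m,σ²)` and a nonnegative integer `j`,
`ρ_j = ∫ [(∂ʲℓ/∂mʲ)/ℓ] · [∂ log ℓ/∂σ] · ℓ dy = 1{j = 2} · 2/σ³`. -/
theorem stmt5 (m σ : ℝ) (hσ : 0 < σ) (j : ℕ) :
    (∫ y : ℝ, (iteratedDeriv j (fun m' => gpdf m' σ y) m / gpdf m σ y)
        * deriv (fun σ' => Real.log (gpdf m σ' y)) σ * gpdf m σ y)
    = if j = 2 then 2 / σ ^ 3 else 0 := by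
  set c : ℝ := (Real.sqrt (2 * Real.pi * σ ^ 2))⁻¹ with hc
  set f : ℝ → ℝ := fun x => aeval x (Hk j) * deriv^[2] g x with hf
  set K : ℝ := (1/σ) ^ j * (1/σ) * c with hK
  have key : ∀ x : ℝ, (-(1/σ)) ^ j * (c * deriv^[j] g x) * ((x ^ 2 - 1) / σ)
      = K * f x := by
    intro x
    rw [hK, hf, iter_deriv_g' j, iter_deriv_g' 2, Hk_two]
    simp only [map_sub, map_pow, Polynomial.aeval_X, map_one]
    have hp := sign_cancel (σ := σ) j
    linear_combination (c * (aeval x (Hk j)) * g x * ((x ^ 2 - 1) / σ)) * hp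
  have hpt : ∀ y : ℝ, (iteratedDeriv j (fun m' => gpdf m' σ y) m / gpdf m σ y)
      * deriv (fun σ' => Real.log (gpdf m σ' y)) σ * gpdf m σ y
      = K * f ((y - m) / σ) := by
    intro y
    have hne := (gpdf_pos hσ m y).ne'
    rw [div_mul_eq_mul_div, div_mul_eq_mul_div,
      mul_div_assoc, div_self hne, mul_one]
    rw [iterDeriv_gpdf hσ, deriv_log_gpdf hσ]
    have hD : (y - m) ^ 2 / σ ^ 3 - 1 / σ = (((y - m) / σ) ^ 2 - 1) / σ := by
      field_simp
    rw [hD, ← key ((y - m) / σ)]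
  rw [MeasureTheory.integral_congr_ae (Filter.Eventually.of_forall hpt)]
  rw [MeasureTheory.integral_const_mul]
  have h1 : (∫ y : ℝ, f ((y - m) / σ)) = ∫ z : ℝ, f (z / σ) :=
    integral_sub_right_eq_self (fun z => f (z / σ)) m
  have h2 : (∫ z : ℝ, f (z / σ)) = |σ| • ∫ x, f x :=
    MeasureTheory.Measure.integral_comp_div f σ
  rw [h1, h2, hf, Kval j, abs_of_pos hσ, smul_eq_mul]
  have hsqrt : Real.sqrt (2 * Real.pi * σ ^ 2) = Real.sqrt (2 * Real.pi) * σ := by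
    rw [Real.sqrt_mul (by positivity), Real.sqrt_sq hσ.le]
  have hs : (0:ℝ) < Real.sqrt (2 * Real.pi) := Real.sqrt_pos.mpr (by positivity)
  split_ifs with hj
  · subst hj
    rw [hK, hc, hsqrt]
    field_simp
  · simp

end
end

section
/- Let d ≥ 1, m ∈ ℝ^d, σ ∈ (0,∞)^d, and let ℓ(y|m,σ) = ∏_{i=1}^d (2πσ_i²)^{−1/2} exp(−(y_i−m_i)²/(2σ_i²)) be the density of a vector of independent normals Y_i ∼ N(m_i, σ_i²). For multi-indices j, k ∈ ℤ_{≥0}^d with j* = Σ_i j_i and k* = Σ_i k_i, define κ(j,k) = E[ (∂^{j*} ℓ(Y|m,σ)/∏_i (∂m_i)^{j_i}) · (∂^{k*} ℓ(Y|m,σ)/∏_i (∂m_i)^{k_i}) / ℓ(Y|m,σ)² ] and, for i′ ∈ {1,…,d}, ρ(j,i′) = E[ ((∂^{j*} ℓ(Y|m,σ)/∏_i (∂m_i)^{j_i}) / ℓ(Y|m,σ)) · (∂ log ℓ(Y|m,σ)/∂σ_{i′}) ]. Then κ(j,k) = 1{j = k} · ∏_{i=1}^d j_i!/σ_i^{2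 j_i}, and ρ(j,i′) = 2/σ_{i′}³ if j_{i′} = 2 and all other entries of j are zero, and ρ(j,i′) = 0 otherwise. -/
noncomputable section

/-- Partial derivative of `f : ℝ^d → ℝ` in the `i`-th coordinate. -/
def pd {d : ℕ} (i : Fin d) (f : (Fin d → ℝ) → ℝ) (x : Fin d → ℝ) : ℝ :=
  deriv (fun t => f (Function.update x i t)) (x i)

/-- Mixed partial derivative `D^m = ∂^{|m|}/∂x₁^{m₁}⋯∂x_d^{m_d}` for a
multi-index `m : Fin d → ℕ`. -/
def mderiv {d : ℕ} (m : Fin d → ℕ) (f : (Fin d → ℝ) → ℝ) : (Fin d → ℝ) → ℝ :=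
  (List.finRange d).foldr (fun i g => (pd i)^[m i] g) f

open Real MeasureTheory Polynomial Filter

theorem hdA (n : ℕ) (x : ℝ) :
    HasDerivAt (fun x : ℝ => aeval x (hermite n) * Real.exp (-(x ^ 2 / 2)))
      (-(aeval x (hermite (n+1)) * Real.exp (-(x ^ 2 / 2)))) x := by
  have h1 : HasDerivAt (fun x : ℝ => aeval x (hermite n))
      (aeval x (derivative (hermite n))) x := (hermite n).hasDerivAt_aeval x
  have h0 : HasDerivAt (fun x : ℝ => -(x ^ 2 / 2)) (-x) x := by
    have := ((hasDerivAt_pow 2 x).div_const 2).neg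
    simp at this
    exact this
  have h2 := h0.exp
  have := h1.mul h2
  refine this.congr_deriv ?_
  have hs : aeval x (hermite (n+1)) =
      x * aeval x (hermite n) - aeval x (derivative (hermite n)) := by
    rw [hermite_succ]; simp
  rw [hs]; ring

theorem derivative_hermite (n : ℕ) :
    derivative (hermite (n+1)) = ((n : ℤ[X]) + 1) * hermite n := by
  induction n with
  | zero => simp [hermite_one, hermite_zero]
  | succ n ih =>
    rw [hermite_succ (n+1), derivative_sub, derivative_mul, derivative_X, ih,
      derivative_mul, hermite_succ n]
    have : (derivative ((n : ℤ[X]) + 1) : ℤ[X]) = 0 := by simp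
    rw [this]
    push_cast
    ring

theorem int_pow_gauss (n : ℕ) : Integrable (fun x : ℝ => x ^ n * Real.exp (-(x ^ 2 / 2))) := by
  have h := integrable_rpow_mul_exp_neg_mul_sq (b := 1/2) (by norm_num) (s := n)
    (by have : (0:ℝ) ≤ n := Nat.cast_nonneg n; linarith)
  have : (fun x : ℝ => x ^ (n : ℝ) * Real.exp (-(1/2) * x ^ 2))
      = fun x : ℝ => x ^ n * Real.exp (-(x ^ 2 / 2)) := by
    funext x; rw [Real.rpow_natCast]; ring_nf
  rwa [this] at h

theorem int_poly_gauss (p : ℝ[X]) :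
    Integrable (fun x : ℝ => p.eval x * Real.exp (-(x ^ 2 / 2))) := by
  have : (fun x : ℝ => p.eval x * Real.exp (-(x ^ 2 / 2)))
      = fun x : ℝ => ∑ i ∈ Finset.range (p.natDegree + 1),
          p.coeff i * (x ^ i * Real.exp (-(x ^ 2 / 2))) := by
    funext x
    rw [Polynomial.eval_eq_sum_range, Finset.sum_mul]
    exact Finset.sum_congr rfl fun i _ => by ring
  rw [this]
  exact integrable_finset_sum _ fun i _ => (int_pow_gauss i).const_mul _

theorem int_poly_gauss' (p : ℤ[X]) :
    Integrable (fun x : ℝ => aeval x p * Real.exp (-(x ^ 2 / 2))) := by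
  have : ∀ x : ℝ, aeval x p = (p.map (Int.castRingHom ℝ)).eval x := fun x => by
    rw [aeval_def, eval_map]; rfl
  simpa only [this] using int_poly_gauss (p.map (Int.castRingHom ℝ))

theorem int_aa_gauss (p q : ℤ[X]) :
    Integrable (fun x : ℝ => aeval x p * (aeval x q * Real.exp (-(x ^ 2 / 2)))) := by
  have : (fun x : ℝ => aeval x p * (aeval x q * Real.exp (-(x ^ 2 / 2))))
      = fun x : ℝ => aeval x (p * q) * Real.exp (-(x ^ 2 / 2)) := by
    funext x; rw [map_mul]; ring
  rw [this]; exact int_poly_gauss' _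

theorem parts_step (n k : ℕ) :
    ∫ x : ℝ, aeval x (hermite k) * (aeval x (hermite (n+1)) * Real.exp (-(x ^ 2 / 2)))
      = ∫ x : ℝ, aeval x (derivative (hermite k)) *
          (aeval x (hermite n) * Real.exp (-(x ^ 2 / 2))) := by
  have hu : ∀ x : ℝ, HasDerivAt (fun x : ℝ => aeval x (hermite k))
      (aeval x (derivative (hermite k))) x := fun x => (hermite k).hasDerivAt_aeval x
  have hv : ∀ x : ℝ, HasDerivAt (fun x : ℝ => -(aeval x (hermite n) * Real.exp (-(x ^ 2 / 2))))
      (aeval x (hermite (n+1)) * Real.exp (-(x ^ 2 / 2))) x := fun x => by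
    have := (hdA n x).neg
    simp only [neg_neg] at this
    exact this
  have h := integral_mul_deriv_eq_deriv_mul_of_integrable (fun x _ => hu x) (fun x _ => hv x) ?_ ?_ ?_
  · calc ∫ x : ℝ, aeval x (hermite k) * (aeval x (hermite (n+1)) * Real.exp (-(x ^ 2 / 2)))
        = - ∫ x : ℝ, aeval x (derivative (hermite k)) *
            (-(aeval x (hermite n) * Real.exp (-(x ^ 2 / 2)))) := h
      _ = _ := by
          rw [← MeasureTheory.integral_neg]
          congr 1; funext x; ring
  · have : ((fun x : ℝ => aeval x (hermite k)) *
        fun x : ℝ => aeval x (hermite (n+1)) * Real.exp (-(x ^ 2 / 2)))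
        = fun x : ℝ => aeval x (hermite k) * (aeval x (hermite (n+1)) * Real.exp (-(x ^ 2 / 2))) := rfl
    rw [this]; exact int_aa_gauss _ _
  · have : ((fun x : ℝ => aeval x (derivative (hermite k))) *
        fun x : ℝ => -(aeval x (hermite n) * Real.exp (-(x ^ 2 / 2))))
        = fun x : ℝ => -(aeval x (derivative (hermite k)) * (aeval x (hermite n) * Real.exp (-(x ^ 2 / 2)))) := by
      funext x; show (fun x : ℝ => aeval x _) x * _ = _; dsimp only; ring
    rw [this]; exact (int_aa_gauss _ _).neg
  · have : ((fun x : ℝ => aeval x (hermite k)) *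
        fun x : ℝ => -(aeval x (hermite n) * Real.exp (-(x ^ 2 / 2))))
        = fun x : ℝ => -(aeval x (hermite k) * (aeval x (hermite n) * Real.exp (-(x ^ 2 / 2)))) := by
      funext x; show (fun x : ℝ => aeval x _) x * _ = _; dsimp only; ring
    rw [this]; exact (int_aa_gauss _ _).neg

theorem gauss_base : ∫ x : ℝ, Real.exp (-(x ^ 2 / 2)) = Real.sqrt (2 * Real.pi) := by
  have : (fun x : ℝ => Real.exp (-(x ^ 2 / 2))) = fun x : ℝ => Real.exp (-(1/2 : ℝ) * x ^ 2) := by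
    funext x; ring_nf
  rw [this, integral_gaussian]
  congr 1
  rw [div_div_eq_mul_div, div_one]
  ring

theorem Jval (n k : ℕ) :
    ∫ x : ℝ, aeval x (hermite n) * (aeval x (hermite k) * Real.exp (-(x ^ 2 / 2)))
      = if n = k then (n.factorial : ℝ) * Real.sqrt (2 * Real.pi) else 0 := by
  induction n generalizing k with
  | zero =>
    cases k with
    | zero => simpa [hermite_zero] using gauss_base
    | succ k' =>
      rw [if_neg (by omega)]
      have h := parts_step k' 0
      simp only [hermite_zero, map_one, derivative_one, map_zero, zero_mul,
        MeasureTheory.integral_zero] at h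
      calc ∫ x : ℝ, aeval x (hermite 0) * (aeval x (hermite (k'+1)) * Real.exp (-(x ^ 2 / 2)))
          = ∫ x : ℝ, aeval x (hermite (k'+1)) * Real.exp (-(x ^ 2 / 2)) := by
            simp [hermite_zero]
        _ = 0 := by
            have h2 := parts_step k' 0
            simpa [hermite_zero, derivative_one] using h2
  | succ n ih =>
    have comm : ∫ x : ℝ, aeval x (hermite (n+1)) * (aeval x (hermite k) * Real.exp (-(x ^ 2 / 2)))
        = ∫ x : ℝ, aeval x (hermite k) * (aeval x (hermite (n+1)) * Real.exp (-(x ^ 2 / 2))) := by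
      congr 1; funext x; ring
    rw [comm, parts_step n k]
    cases k with
    | zero => simp [hermite_zero, derivative_one]
    | succ k' =>
      rw [derivative_hermite k']
      have : ∫ x : ℝ, aeval x (((k' : ℤ[X]) + 1) * hermite k') *
          (aeval x (hermite n) * Real.exp (-(x ^ 2 / 2)))
          = ((k' : ℝ) + 1) * ∫ x : ℝ, aeval x (hermite n) *
              (aeval x (hermite k') * Real.exp (-(x ^ 2 / 2))) := by
        rw [← MeasureTheory.integral_const_mul]
        congr 1; funext x
        simp only [map_mul, map_add, map_natCast, map_one]
        push_cast
        ring
      rw [this, ih k']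
      by_cases h : n = k'
      · subst h
        rw [if_pos rfl, if_pos rfl]
        push_cast [Nat.factorial_succ]
        ring
      · rw [if_neg h, if_neg (by omega), mul_zero]

theorem gpdf_eq {σ : ℝ} (hσ : 0 < σ) (m y : ℝ) :
    gpdf m σ y = (Real.sqrt (2 * Real.pi) * σ)⁻¹ * Real.exp (-(((y - m)/σ) ^ 2 / 2)) := by
  unfold gpdf
  have h1 : Real.sqrt (2 * Real.pi * σ ^ 2) = Real.sqrt (2 * Real.pi) * σ := by
    rw [Real.sqrt_mul (by positivity), Real.sqrt_sq hσ.le]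
  rw [h1]
  congr 1
  rw [div_pow]
  field_simp

theorem gpdf_pos {σ : ℝ} (hσ : 0 < σ) (m y : ℝ) : 0 < gpdf m σ y := by
  rw [gpdf_eq hσ]
  have : 0 < Real.sqrt (2 * Real.pi) := Real.sqrt_pos.2 (by positivity)
  positivity

theorem int_hh_gpdf {σ : ℝ} (hσ : 0 < σ) (m : ℝ) (n k : ℕ) :
    ∫ y : ℝ, aeval ((y - m)/σ) (hermite n) * (aeval ((y - m)/σ) (hermite k) * gpdf m σ y)
      = if n = k then (n.factorial : ℝ) else 0 := by
  have hs : (0:ℝ) < Real.sqrt (2 * Real.pi) := Real.sqrt_pos.2 (by positivity)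
  set G : ℝ → ℝ := fun x => (Real.sqrt (2 * Real.pi) * σ)⁻¹ *
    (aeval x (hermite n) * (aeval x (hermite k) * Real.exp (-(x ^ 2 / 2)))) with hG
  have h1 : (fun y : ℝ => aeval ((y - m)/σ) (hermite n) *
      (aeval ((y - m)/σ) (hermite k) * gpdf m σ y))
      = fun y => G ((y - m) / σ) := by
    funext y; rw [hG, gpdf_eq hσ]; dsimp only; ring
  rw [h1]
  have h2 : (∫ y : ℝ, G ((y - m) / σ)) = ∫ y : ℝ, G (y / σ) := by
    have := integral_sub_right_eq_self (μ := volume) (fun y : ℝ => G (y / σ)) m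
    simpa using this
  rw [h2, MeasureTheory.Measure.integral_comp_div G σ]
  rw [hG]
  rw [MeasureTheory.integral_const_mul, Jval, abs_of_pos hσ]
  by_cases h : n = k
  · rw [if_pos h, if_pos h, smul_eq_mul]
    field_simp
  · rw [if_neg h, if_neg h]
    simp

theorem gpdf_iter {σ : ℝ} (hσ : 0 < σ) (y : ℝ) (n : ℕ) :
    deriv^[n] (fun t => gpdf t σ y)
      = fun t => σ⁻¹ ^ n * aeval ((y - t) / σ) (hermite n) * gpdf t σ y := by
  induction n with
  | zero => funext t; simp [hermite_zero]
  | succ n ih =>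
    rw [Function.iterate_succ_apply', ih]
    funext t
    have hE : (fun t : ℝ => σ⁻¹ ^ n * aeval ((y - t)/σ) (hermite n) * gpdf t σ y)
        = fun t => (σ⁻¹ ^ n * (Real.sqrt (2 * Real.pi) * σ)⁻¹) *
            (aeval ((y - t)/σ) (hermite n) * Real.exp (-(((y - t)/σ) ^ 2 / 2))) := by
      funext t; rw [gpdf_eq hσ]; ring
    rw [hE]
    have hin : HasDerivAt (fun t : ℝ => (y - t)/σ) (-1/σ) t := by
      simpa using ((hasDerivAt_id t).const_sub y).div_const σ
    have h2 : HasDerivAt (fun t : ℝ => aeval ((y - t)/σ) (hermite n) *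
        Real.exp (-(((y - t)/σ) ^ 2 / 2)))
        (-(aeval ((y - t)/σ) (hermite (n+1)) * Real.exp (-(((y - t)/σ) ^ 2 / 2))) * (-1/σ)) t := by
      exact (hdA n ((y - t)/σ)).comp t hin
    have h3 := h2.const_mul (σ⁻¹ ^ n * (Real.sqrt (2 * Real.pi) * σ)⁻¹)
    rw [h3.deriv, gpdf_eq hσ]
    rw [pow_succ]
    ring

theorem pd_prod {d : ℕ} (G : Fin d → ℝ → ℝ) (i : Fin d) :
    pd i (fun x => ∏ l, G l (x l))
      = fun x => ∏ l, Function.update G i (deriv (G i)) l (x l) := by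
  funext x
  unfold pd
  have h1 : (fun t => ∏ l, G l (Function.update x i t l))
      = fun t => G i t * ∏ l ∈ Finset.univ.erase i, G l (x l) := by
    funext t
    rw [← Finset.mul_prod_erase Finset.univ _ (Finset.mem_univ i)]
    congr 1
    · rw [Function.update_self]
    · exact Finset.prod_congr rfl fun l hl => by
        rw [Function.update_of_ne (Finset.ne_of_mem_erase hl)]
  rw [h1, deriv_mul_const_field]
  rw [← Finset.mul_prod_erase Finset.univ _ (Finset.mem_univ i), Function.update_self]
  congr 1
  exact Finset.prod_congr rfl fun l hl => by
    rw [Function.update_of_ne (Finset.ne_of_mem_erase hl)]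

theorem pd_iter_prod {d : ℕ} (G : Fin d → ℝ → ℝ) (i : Fin d) (n : ℕ) :
    (pd i)^[n] (fun x => ∏ l, G l (x l))
      = fun x => ∏ l, Function.update G i (deriv^[n] (G i)) l (x l) := by
  induction n with
  | zero => simp [Function.update_eq_self]
  | succ n ih =>
    rw [Function.iterate_succ_apply', ih, pd_prod]
    have : Function.update (Function.update G i (deriv^[n] (G i))) i
        (deriv (Function.update G i (deriv^[n] (G i)) i))
        = Function.update G i (deriv^[n+1] (G i)) := by
      rw [Function.update_self, Function.update_idem, Function.iterate_succ_apply']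
    rw [this]

theorem mderiv_prod {d : ℕ} (j : Fin d → ℕ) (G : Fin d → ℝ → ℝ) :
    mderiv j (fun x => ∏ l, G l (x l))
      = fun x => ∏ l, deriv^[j l] (G l) (x l) := by
  unfold mderiv
  have key : ∀ L : List (Fin d), L.Nodup →
      L.foldr (fun i g => (pd i)^[j i] g) (fun x => ∏ l, G l (x l))
        = fun x => ∏ l, (if l ∈ L then deriv^[j l] (G l) else G l) (x l) := by
    intro L hL
    induction L with
    | nil => simp
    | cons i L ih =>
      have hiL : i ∉ L := (List.nodup_cons.1 hL).1
      have hL' : L.Nodup := (List.nodup_cons.1 hL).2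
      rw [List.foldr_cons, ih hL', pd_iter_prod]
      funext x
      refine Finset.prod_congr rfl fun l _ => ?_
      by_cases hl : l = i
      · subst hl
        rw [Function.update_self, if_neg hiL, if_pos List.mem_cons_self]
      · rw [Function.update_of_ne hl]
        by_cases hm : l ∈ L
        · rw [if_pos hm, if_pos (List.mem_cons_of_mem i hm)]
        · rw [if_neg hm, if_neg (by simp [hl, hm])]
  rw [key (List.finRange d) (List.nodup_finRange d)]
  funext x
  exact Finset.prod_congr rfl fun l _ => by rw [if_pos (List.mem_finRange l)]

theorem herm2 : (hermite 2 : ℤ[X]) = X ^ 2 - 1 := by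
  have : (2 : ℕ) = 1 + 1 := rfl
  rw [this, hermite_succ, hermite_one, derivative_X]
  ring

theorem deriv_log_gpdf {s : ℝ} (hs : 0 < s) (m y : ℝ) :
    deriv (fun t => Real.log (gpdf m t y)) s = aeval ((y - m)/s) (hermite 2) / s := by
  have hsqrt : (0:ℝ) < Real.sqrt (2 * Real.pi) := Real.sqrt_pos.2 (by positivity)
  set c : ℝ := (y - m) ^ 2 / 2 with hc
  set g : ℝ → ℝ := fun t => (-Real.log (Real.sqrt (2 * Real.pi)) - Real.log t) - c * (t ^ 2)⁻¹
    with hg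
  have heq : (fun t => Real.log (gpdf m t y)) =ᶠ[nhds s] g := by
    filter_upwards [Ioi_mem_nhds hs] with t ht
    rw [Set.mem_Ioi] at ht
    have h0 : (0:ℝ) < Real.sqrt (2 * Real.pi) * t := mul_pos hsqrt ht
    rw [gpdf_eq ht, Real.log_mul (inv_ne_zero h0.ne') (Real.exp_pos _).ne',
      Real.log_inv, Real.log_mul hsqrt.ne' (ne_of_gt ht), Real.log_exp, hg]
    dsimp only
    rw [div_pow, hc]
    field_simp
    ring
  have h1 : HasDerivAt (fun t : ℝ => -Real.log (Real.sqrt (2 * Real.pi)) - Real.log t)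
      (-s⁻¹) s := by
    simpa using (Real.hasDerivAt_log (ne_of_gt hs)).const_sub
      (-Real.log (Real.sqrt (2 * Real.pi)))
  have h2 : HasDerivAt (fun t : ℝ => (t ^ 2)⁻¹) (-(2 * s ^ 1) / (s ^ 2) ^ 2) s :=
    (hasDerivAt_pow 2 s).inv (pow_ne_zero 2 (ne_of_gt hs))
  have hgd := h1.sub (h2.const_mul c)
  rw [heq.deriv_eq, show deriv g s = _ from hgd.deriv]
  rw [herm2]
  simp only [map_sub, map_pow, map_one, aeval_X]
  rw [div_pow, hc]
  field_simp
  ring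

theorem pd_log {d : ℕ} (m σ y : Fin d → ℝ) (hσ : ∀ i, 0 < σ i) (i' : Fin d) :
    pd i' (fun σ' => Real.log (∏ i, gpdf (m i) (σ' i) (y i))) σ
      = aeval ((y i' - m i')/σ i') (hermite 2) / σ i' := by
  unfold pd
  have hC : (0:ℝ) < ∏ l ∈ Finset.univ.erase i', gpdf (m l) (σ l) (y l) :=
    Finset.prod_pos fun l _ => gpdf_pos (hσ l) _ _
  have heq : (fun t => Real.log (∏ i, gpdf (m i) (Function.update σ i' t i) (y i)))
      =ᶠ[nhds (σ i')] fun t => Real.log (gpdf (m i') t (y i'))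
          + Real.log (∏ l ∈ Finset.univ.erase i', gpdf (m l) (σ l) (y l)) := by
    filter_upwards [Ioi_mem_nhds (hσ i')] with t ht
    rw [Set.mem_Ioi] at ht
    have hp : (∏ i, gpdf (m i) (Function.update σ i' t i) (y i))
        = gpdf (m i') t (y i') * ∏ l ∈ Finset.univ.erase i', gpdf (m l) (σ l) (y l) := by
      rw [← Finset.mul_prod_erase Finset.univ _ (Finset.mem_univ i')]
      congr 1
      · rw [Function.update_self]
      · exact Finset.prod_congr rfl fun l hl => by
          rw [Function.update_of_ne (Finset.ne_of_mem_erase hl)]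
    rw [hp, Real.log_mul (gpdf_pos ht _ _).ne' hC.ne']
  rw [heq.deriv_eq, deriv_add_const, deriv_log_gpdf (hσ i')]

/-- **Bhattacharyya-basis moments for a vector of independent normals.**
For `Y ∼ N(m, diag(σ₁²,…,σ_d²))` and multi-indices `j, k ∈ ℤ_{≥0}^d`,
`κ(j,k) = E[(D^j_m ℓ)(D^k_m ℓ)/ℓ²] = 1{j = k} ∏ᵢ jᵢ!/σᵢ^{2jᵢ}`, and for
`i' ∈ {1,…,d}`, `ρ(j,i') = E[((D^j_m ℓ)/ℓ)·(∂ log ℓ/∂σ_{i'})]` equals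
`2/σ_{i'}³` if `j_{i'} = 2` and all other entries of `j` vanish, and `0`
otherwise. -/
theorem stmt6 (d : ℕ) (hd : 1 ≤ d) (m σ : Fin d → ℝ) (hσ : ∀ i, 0 < σ i)
    (j k : Fin d → ℕ) (i' : Fin d) :
    ((∫ y : Fin d → ℝ,
        mderiv j (fun m' => ∏ i, gpdf (m' i) (σ i) (y i)) m
          * mderiv k (fun m' => ∏ i, gpdf (m' i) (σ i) (y i)) m
          / ∏ i, gpdf (m i) (σ i) (y i))
      = if j = k then ∏ i, (Nat.factorial (j i) : ℝ) / σ i ^ (2 * j i) else 0)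
    ∧ ((∫ y : Fin d → ℝ,
        (mderiv j (fun m' => ∏ i, gpdf (m' i) (σ i) (y i)) m
            / ∏ i, gpdf (m i) (σ i) (y i))
          * pd i' (fun σ' => Real.log (∏ i, gpdf (m i) (σ' i) (y i))) σ
          * ∏ i, gpdf (m i) (σ i) (y i))
      = if j i' = 2 ∧ ∀ i, i ≠ i' → j i = 0 then 2 / σ i' ^ 3 else 0) := by
  have hg : ∀ y : Fin d → ℝ, (0:ℝ) < ∏ i, gpdf (m i) (σ i) (y i) :=
    fun y => Finset.prod_pos fun i _ => gpdf_pos (hσ i) _ _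
  have hm : ∀ (J : Fin d → ℕ) (y : Fin d → ℝ),
      mderiv J (fun m' => ∏ i, gpdf (m' i) (σ i) (y i)) m
        = ∏ l, (σ l)⁻¹ ^ (J l) * aeval ((y l - m l)/σ l) (hermite (J l))
            * gpdf (m l) (σ l) (y l) := by
    intro J y
    have h := mderiv_prod J (fun l t => gpdf t (σ l) (y l))
    rw [h]
    exact Finset.prod_congr rfl fun l _ => by rw [gpdf_iter (hσ l)]
  constructor
  · -- κ part
    set ψ : Fin d → ℝ → ℝ := fun l t =>
      ((σ l)⁻¹ ^ (j l) * (σ l)⁻¹ ^ (k l)) *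
        (aeval ((t - m l)/σ l) (hermite (j l)) *
          (aeval ((t - m l)/σ l) (hermite (k l)) * gpdf (m l) (σ l) t)) with hψ
    have step : (∫ y : Fin d → ℝ,
        mderiv j (fun m' => ∏ i, gpdf (m' i) (σ i) (y i)) m
          * mderiv k (fun m' => ∏ i, gpdf (m' i) (σ i) (y i)) m
          / ∏ i, gpdf (m i) (σ i) (y i))
        = ∫ y : Fin d → ℝ, ∏ l, ψ l (y l) := by
      refine MeasureTheory.integral_congr_ae (Filter.Eventually.of_forall fun y => ?_)
      dsimp only
      rw [hm j y, hm k y, div_eq_iff (hg y).ne', ← Finset.prod_mul_distrib,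
        ← Finset.prod_mul_distrib]
      exact Finset.prod_congr rfl fun l _ => by rw [hψ]; dsimp only; ring
    rw [step, MeasureTheory.integral_fintype_prod_volume_eq_prod (ι := Fin d) ψ]
    have hint : ∀ l, (∫ t : ℝ, ψ l t)
        = ((σ l)⁻¹ ^ (j l) * (σ l)⁻¹ ^ (k l)) *
            (if j l = k l then ((j l).factorial : ℝ) else 0) := by
      intro l
      rw [hψ]
      dsimp only
      rw [MeasureTheory.integral_const_mul, int_hh_gpdf (hσ l)]
    rw [Finset.prod_congr rfl fun l _ => hint l]
    by_cases hjk : j = k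
    · subst hjk
      rw [if_pos rfl]
      refine Finset.prod_congr rfl fun l _ => ?_
      rw [if_pos rfl, two_mul, pow_add, inv_pow, div_eq_mul_inv, mul_inv]
      ring
    · rw [if_neg hjk]
      obtain ⟨l, hl⟩ : ∃ l, j l ≠ k l := by
        by_contra h; push_neg at h; exact hjk (funext h)
      exact Finset.prod_eq_zero (Finset.mem_univ l) (by rw [if_neg hl, mul_zero])
  · -- ρ part
    set ψ : Fin d → ℝ → ℝ := fun l t =>
      ((σ l)⁻¹ ^ (j l) * (if l = i' then (σ l)⁻¹ else 1)) *
        (aeval ((t - m l)/σ l) (hermite (j l)) *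
          (aeval ((t - m l)/σ l) (hermite (if l = i' then 2 else 0)) * gpdf (m l) (σ l) t))
      with hψ
    have step : (∫ y : Fin d → ℝ,
        (mderiv j (fun m' => ∏ i, gpdf (m' i) (σ i) (y i)) m
            / ∏ i, gpdf (m i) (σ i) (y i))
          * pd i' (fun σ' => Real.log (∏ i, gpdf (m i) (σ' i) (y i))) σ
          * ∏ i, gpdf (m i) (σ i) (y i))
        = ∫ y : Fin d → ℝ, ∏ l, ψ l (y l) := by
      refine MeasureTheory.integral_congr_ae (Filter.Eventually.of_forall fun y => ?_)
      dsimp only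
      rw [hm j y, pd_log m σ y hσ i']
      have hprod : (∏ l, ψ l (y l))
          = (∏ l, (σ l)⁻¹ ^ (j l) * aeval ((y l - m l)/σ l) (hermite (j l))
              * gpdf (m l) (σ l) (y l))
            * (aeval ((y i' - m i')/σ i') (hermite 2) * (σ i')⁻¹) := by
        have h1 : ∀ l, ψ l (y l)
            = ((σ l)⁻¹ ^ (j l) * aeval ((y l - m l)/σ l) (hermite (j l))
                * gpdf (m l) (σ l) (y l))
              * (if l = i' then aeval ((y l - m l)/σ l) (hermite 2) * (σ l)⁻¹ else 1) := by
          intro l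
          rw [hψ]
          by_cases hl : l = i'
          · subst hl; simp only [eq_self_iff_true, if_true]; ring
          · simp only [if_neg hl, hermite_zero, map_one]; ring
        rw [Finset.prod_congr rfl fun l _ => h1 l, Finset.prod_mul_distrib,
          Finset.prod_ite_eq' Finset.univ i'
            (fun l => aeval ((y l - m l)/σ l) (hermite 2) * (σ l)⁻¹),
          if_pos (Finset.mem_univ i')]
      rw [hprod, div_mul_eq_mul_div, div_mul_eq_mul_div, div_eq_iff (hg y).ne']
      ring
    rw [step, MeasureTheory.integral_fintype_prod_volume_eq_prod (ι := Fin d) ψ]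
    have hint : ∀ l, (∫ t : ℝ, ψ l t)
        = ((σ l)⁻¹ ^ (j l) * (if l = i' then (σ l)⁻¹ else 1)) *
            (if j l = (if l = i' then 2 else 0) then ((j l).factorial : ℝ) else 0) := by
      intro l
      rw [hψ]
      dsimp only
      rw [MeasureTheory.integral_const_mul, int_hh_gpdf (hσ l)]
    rw [Finset.prod_congr rfl fun l _ => hint l]
    by_cases hc : j i' = 2 ∧ ∀ i, i ≠ i' → j i = 0
    · obtain ⟨h2, h0⟩ := hc
      rw [if_pos ⟨h2, h0⟩]
      rw [Finset.prod_eq_single i' (fun l _ hl => by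
        simp only [if_neg hl]; rw [h0 l hl]; norm_num)
        (fun h => absurd (Finset.mem_univ i') h)]
      have e1 : (if i' = i' then (σ i')⁻¹ else 1) = (σ i')⁻¹ := if_pos rfl
      have e2 : (if (i' : Fin d) = i' then 2 else 0) = 2 := if_pos rfl
      rw [e1, e2, h2, if_pos rfl]
      have hfac : ((Nat.factorial 2 : ℕ) : ℝ) = 2 := by norm_num [Nat.factorial]
      rw [hfac, eq_div_iff (pow_ne_zero 3 (hσ i').ne')]
      have hne : σ i' ≠ 0 := (hσ i').ne'
      field_simp
    · rw [if_neg hc]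
      push_neg at hc
      by_cases h2 : j i' = 2
      · obtain ⟨l, hl, hjl⟩ := hc h2
        refine Finset.prod_eq_zero (Finset.mem_univ l) ?_
        simp only [if_neg hl]
        rw [if_neg hjl, mul_zero]
      · refine Finset.prod_eq_zero (Finset.mem_univ i') ?_
        have e2 : (if (i' : Fin d) = i' then 2 else 0) = 2 := if_pos rfl
        rw [e2, if_neg h2, mul_zero]

end
end

section
/- Fix an integer T ≥ 1, σ² > 0, η ∈ ℝ, and y ∈ ℝ^T, and write ȳ = T⁻¹ Σ_{j=1}^T y_j. Define u(y; σ², η) = −T/(2σ²) + (1/(2σ⁴)) Σ_{j=1}^T (y_j − η)² and v₂(y; σ², η) = −T/σ² + (Σ_{j=1}^T (y_j − η)/σ²)². Then u(y; σ², η) − (1/(2T)) v₂(y; σ², η) = (1/(2σ²)) [ (Σ_{j=1}^T (y_j − ȳ)²)/σ² − (T − 1) ]; in particular, the left-hand side does not depend on η. -/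
/-- **Neyman–Scott model: the second-order orthogonalized score.**
For `T ≥ 1`, `s = σ² > 0`, `η ∈ ℝ` and `y ∈ ℝ^T`, the per-unit score
`u(y;σ²,η) = -T/(2σ²) + (1/(2σ⁴)) ∑ⱼ (yⱼ-η)²` minus `(1/(2T))` times the second
Bhattacharyya basis function `v₂(y;σ²,η) = -T/σ² + (∑ⱼ (yⱼ-η)/σ²)²` equals the
degrees-of-freedom-corrected score `(1/(2σ²)) [ (∑ⱼ (yⱼ-ȳ)²)/σ² - (T-1) ]`,
which does not depend on `η`. -/
theorem stmt8 (T : ℕ) (hT : 1 ≤ T) (s η : ℝ) (hs : 0 < s) (y : Fin T → ℝ) :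
    (-(T : ℝ) / (2 * s) + (1 / (2 * s ^ 2)) * ∑ j, (y j - η) ^ 2)
      - (1 / (2 * (T : ℝ))) * (-(T : ℝ) / s + (∑ j, (y j - η) / s) ^ 2)
    = (1 / (2 * s)) * ((∑ j, (y j - (∑ k, y k) / (T : ℝ)) ^ 2) / s - ((T : ℝ) - 1)) := by
  have hT' : (T : ℝ) ≠ 0 := by positivity
  have hs' : s ≠ 0 := ne_of_gt hs
  set S1 := ∑ j, y j with hS1
  set S2 := ∑ j, (y j) ^ 2 with hS2
  have h1 : ∑ j, (y j - η) ^ 2 = S2 - 2 * η * S1 + T * η ^ 2 := by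
    simp only [sub_sq, Finset.sum_add_distrib, Finset.sum_sub_distrib,
      Finset.mul_sum, ← hS1, ← hS2, Finset.sum_const, Finset.card_univ,
      Fintype.card_fin, nsmul_eq_mul]
    have hmul : ∀ c : ℝ, ∑ j, y j * c = S1 * c := fun c => by
      rw [hS1, Finset.sum_mul]
    ring_nf
    simp only [mul_assoc, hmul]
    ring
  have h2 : ∑ j, (y j - η) / s = (S1 - T * η) / s := by
    rw [← Finset.sum_div]
    congr 1
    simp [Finset.sum_sub_distrib, ← hS1]
  have h3 : ∑ j, (y j - S1 / T) ^ 2 = S2 - 2 * (S1 / T) * S1 + T * (S1 / T) ^ 2 := by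
    simp only [sub_sq, Finset.sum_add_distrib, Finset.sum_sub_distrib, ← Finset.sum_mul,
      ← hS1, ← hS2, Finset.sum_const, Finset.card_univ, Fintype.card_fin, nsmul_eq_mul]
    have hmul : ∀ c : ℝ, ∑ j, y j * c = S1 * c := fun c => by
      rw [hS1, Finset.sum_mul]
    ring_nf
    simp only [mul_assoc, hmul]
    ring
  rw [h1, h2, h3]
  field_simp
  ring
end

section
/- Let n, m ≥ 1, let X be a real n × m matrix with XᵀX invertible, and let A and B be symmetric m × m real matrices. Then the m(m+1)/2 × m(m+1)/2 matrix L_m (Xᵀ⊗Xᵀ)(I_{n²} + K_n)(X⊗X) L_mᵀ is invertible and vech(A)ᵀ [ L_m (Xᵀ⊗Xᵀ)(I_{n²} + K_n)(X⊗X) L_mᵀ ]⁻¹ vech(B) = (1/2) Tr( A (XᵀX)⁻¹ B (XᵀX)⁻¹ ). -/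
open Matrix Kronecker

noncomputable section

/-- Index set for the half-vectorization: pairs `(i,j)` with `j ≤ i`. -/
abbrev SymIdx (r : ℕ) := {p : Fin r × Fin r // p.2 ≤ p.1}

/-- Half-vectorization `vech` of a square matrix. -/
def vech {r : ℕ} (A : Matrix (Fin r) (Fin r) ℝ) : SymIdx r → ℝ :=
  fun p => A p.1.1 p.1.2

/-- The commutation matrix `K_n`, characterized by `K_n vec(A) = vec(Aᵀ)`. -/
def Kmat (n : ℕ) : Matrix (Fin n × Fin n) (Fin n × Fin n) ℝ :=
  Matrix.of fun p q => if q = (p.2, p.1) then 1 else 0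

/-- The elimination matrix `L_m`, characterized by `L_m vec(A) = vech(A)`. -/
def Lmat (m : ℕ) : Matrix (SymIdx m) (Fin m × Fin m) ℝ :=
  Matrix.of fun s q => if q = s.1 then 1 else 0

namespace Stmt15Aux

open Finset

/-- Weight: `1/2` on diagonal index pairs, `1` off the diagonal. -/
def wgt {m : ℕ} (p : Fin m × Fin m) : ℝ := if p.1 = p.2 then 1/2 else 1

lemma sum_symIdx {m : ℕ} (f : Fin m × Fin m → ℝ)
    (hf : ∀ p : Fin m × Fin m, f (p.2, p.1) = f p) :
    ∑ s : SymIdx m, wgt s.1 * f s.1 = (1/2) * ∑ p : Fin m × Fin m, f p := by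
  classical
  have h1 : ∑ s : SymIdx m, wgt s.1 * f s.1
      = ∑ p ∈ univ.filter (fun p : Fin m × Fin m => p.2 ≤ p.1), wgt p * f p :=
    (Finset.sum_subtype _ (by simp) (fun p => wgt p * f p)).symm
  have hsplit : ∑ p : Fin m × Fin m, f p
      = ∑ p ∈ univ.filter (fun p : Fin m × Fin m => p.2 ≤ p.1), f p
      + ∑ p ∈ univ.filter (fun p : Fin m × Fin m => ¬ p.2 ≤ p.1), f p :=
    (Finset.sum_filter_add_sum_filter_not _ _ _).symm
  have hle : ∀ g : Fin m × Fin m → ℝ,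
      ∑ p ∈ univ.filter (fun p : Fin m × Fin m => p.2 ≤ p.1), g p
      = ∑ p ∈ univ.filter (fun p : Fin m × Fin m => p.2 < p.1), g p
      + ∑ p ∈ univ.filter (fun p : Fin m × Fin m => p.2 = p.1), g p := by
    intro g
    rw [← Finset.sum_union]
    · apply Finset.sum_congr
      · ext p
        simp only [Finset.mem_filter, Finset.mem_union, Finset.mem_univ, true_and]
        constructor
        · intro h
          rcases h.lt_or_eq with h' | h'
          · exact Or.inl h'
          · exact Or.inr h'
        · rintro (h | h); exacts [le_of_lt h, le_of_eq h]
      · intros; rfl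
    · rw [Finset.disjoint_left]
      intro p hp hp'
      simp only [Finset.mem_filter, Finset.mem_univ, true_and] at hp hp'
      exact absurd hp' (ne_of_lt hp)
  have hswap : ∑ p ∈ univ.filter (fun p : Fin m × Fin m => ¬ p.2 ≤ p.1), f p
      = ∑ p ∈ univ.filter (fun p : Fin m × Fin m => p.2 < p.1), f p := by
    apply Finset.sum_nbij' (fun p => (p.2, p.1)) (fun p => (p.2, p.1))
    · intro a ha
      simp only [Finset.mem_filter, Finset.mem_univ, true_and] at ha ⊢
      exact lt_of_not_ge ha
    · intro a ha
      simp only [Finset.mem_filter, Finset.mem_univ, true_and] at ha ⊢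
      exact not_le_of_gt ha
    · intro a _; rfl
    · intro a _; rfl
    · intro a _; exact (hf a).symm
  have hw1 : ∀ p ∈ univ.filter (fun p : Fin m × Fin m => p.2 < p.1),
      wgt p * f p = f p := by
    intro p hp
    simp only [Finset.mem_filter, Finset.mem_univ, true_and] at hp
    simp [wgt, (ne_of_gt hp)]
  have hw2 : ∀ p ∈ univ.filter (fun p : Fin m × Fin m => p.2 = p.1),
      wgt p * f p = (1/2) * f p := by
    intro p hp
    simp only [Finset.mem_filter, Finset.mem_univ, true_and] at hp
    simp [wgt, hp.symm]
  rw [h1, hle, Finset.sum_congr rfl hw1, Finset.sum_congr rfl hw2,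
    hsplit, hswap, hle f, ← Finset.mul_sum]
  ring

/-- Entries of the middle block `(Xᵀ⊗Xᵀ)(1+K_n)(X⊗X)`. -/
lemma Q_apply {n m : ℕ} (X : Matrix (Fin n) (Fin m) ℝ) (p r : Fin m × Fin m) :
    (((Xᵀ ⊗ₖ Xᵀ) * (1 + Kmat n) * (X ⊗ₖ X)) : Matrix (Fin m × Fin m) (Fin m × Fin m) ℝ) p r
      = (Xᵀ * X) p.1 r.1 * (Xᵀ * X) p.2 r.2 + (Xᵀ * X) p.1 r.2 * (Xᵀ * X) p.2 r.1 := by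
  classical
  have h1 : ∀ c : Fin n × Fin n,
      (((Xᵀ ⊗ₖ Xᵀ) * (1 + Kmat n)) : Matrix (Fin m × Fin m) (Fin n × Fin n) ℝ) p c
      = (Xᵀ ⊗ₖ Xᵀ) p c + (Xᵀ ⊗ₖ Xᵀ) p (c.2, c.1) := by
    intro c
    rw [Matrix.mul_apply]
    simp only [Matrix.add_apply, Matrix.one_apply, Kmat, Matrix.of_apply, mul_add]
    rw [Finset.sum_add_distrib]
    congr 1
    · simp [mul_ite]
    · rw [Finset.sum_eq_single (c.2, c.1)]
      · simp
      · intro b _ hb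
        have : ¬ c = (b.2, b.1) := by
          intro h; apply hb; rw [h]
        simp [this]
      · simp
  rw [Matrix.mul_apply]
  simp only [h1, add_mul]
  rw [Finset.sum_add_distrib]
  congr 1
  · rw [Fintype.sum_prod_type]
    simp only [Matrix.kroneckerMap_apply, Matrix.transpose_apply, Matrix.mul_apply,
      Matrix.transpose_apply]
    rw [Finset.sum_mul_sum]
    apply Finset.sum_congr rfl; intro a _
    apply Finset.sum_congr rfl; intro b _
    ring
  · rw [Fintype.sum_prod_type]
    simp only [Matrix.kroneckerMap_apply, Matrix.transpose_apply, Matrix.mul_apply,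
      Matrix.transpose_apply]
    rw [Finset.sum_comm, Finset.sum_mul_sum]
    apply Finset.sum_congr rfl; intro a _
    apply Finset.sum_congr rfl; intro b _
    ring

/-- Sandwiching by the elimination matrix picks out entries. -/
lemma LQL_apply {m : ℕ} (Q : Matrix (Fin m × Fin m) (Fin m × Fin m) ℝ) (s t : SymIdx m) :
    (Lmat m * Q * (Lmat m)ᵀ) s t = Q s.1 t.1 := by
  classical
  have h1 : ∀ c, (Lmat m * Q) s c = Q s.1 c := by
    intro c
    rw [Matrix.mul_apply]
    rw [Finset.sum_eq_single s.1]
    · simp [Lmat]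
    · intro b _ hb; simp [Lmat, hb]
    · simp
  rw [Matrix.mul_apply]
  rw [Finset.sum_eq_single t.1]
  · rw [h1, Matrix.transpose_apply]; simp [Lmat]
  · intro b _ hb; rw [h1, Matrix.transpose_apply]; simp [Lmat, hb]
  · simp

/-- The matrix `L(Xᵀ⊗Xᵀ)(1+K)(X⊗X)Lᵀ` expressed through `S = XᵀX`. -/
def Mmat {m : ℕ} (S : Matrix (Fin m) (Fin m) ℝ) : Matrix (SymIdx m) (SymIdx m) ℝ :=
  fun s t => S s.1.1 t.1.1 * S s.1.2 t.1.2 + S s.1.1 t.1.2 * S s.1.2 t.1.1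

/-- The explicit inverse, built from `T = (XᵀX)⁻¹`. -/
def Nmat {m : ℕ} (T : Matrix (Fin m) (Fin m) ℝ) : Matrix (SymIdx m) (SymIdx m) ℝ :=
  fun s t => wgt s.1 * wgt t.1 *
    (T s.1.1 t.1.1 * T s.1.2 t.1.2 + T s.1.1 t.1.2 * T s.1.2 t.1.1)

lemma prod_factor {m : ℕ} (u v : Fin m → ℝ) :
    ∑ p : Fin m × Fin m, u p.1 * v p.2 = (∑ k, u k) * (∑ l, v l) := by
  rw [Fintype.sum_prod_type, Finset.sum_mul_sum]

lemma delta_combine {m : ℕ} (i j a b : Fin m) (hji : j ≤ i) (hba : b ≤ a) :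
    (1/2 : ℝ) * (wgt ((a,b) : Fin m × Fin m) *
      ((if i = a then (1:ℝ) else 0) * (if j = b then (1:ℝ) else 0)
      + (if i = b then (1:ℝ) else 0) * (if j = a then (1:ℝ) else 0)
      + (if j = a then (1:ℝ) else 0) * (if i = b then (1:ℝ) else 0)
      + (if j = b then (1:ℝ) else 0) * (if i = a then (1:ℝ) else 0)))
    = if (i = a ∧ j = b) then 1 else 0 := by
  by_cases hia : i = a <;> by_cases hjb : j = b <;> by_cases hib : i = b <;>
    by_cases hja : j = a <;>
    simp_all [wgt] <;> try norm_num
  all_goals omega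

lemma MN_eq_one {m : ℕ} (S T : Matrix (Fin m) (Fin m) ℝ)
    (hST : ∀ i a : Fin m, ∑ k, S i k * T k a = if i = a then 1 else 0) :
    Mmat S * Nmat T = 1 := by
  classical
  ext s t
  obtain ⟨⟨i, j⟩, hji⟩ := s
  obtain ⟨⟨a, b⟩, hba⟩ := t
  simp only at hji hba
  rw [Matrix.mul_apply]
  have step1 : ∀ u : SymIdx m,
      Mmat S ⟨(i,j), hji⟩ u * Nmat T u ⟨(a,b), hba⟩
      = wgt u.1 * (wgt ((a,b) : Fin m × Fin m) *
          (S i u.1.1 * T u.1.1 a * (S j u.1.2 * T u.1.2 b)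
          + S i u.1.1 * T u.1.1 b * (S j u.1.2 * T u.1.2 a)
          + S j u.1.1 * T u.1.1 a * (S i u.1.2 * T u.1.2 b)
          + S j u.1.1 * T u.1.1 b * (S i u.1.2 * T u.1.2 a))) := by
    intro u
    simp only [Mmat, Nmat]
    ring
  rw [Finset.sum_congr rfl (fun u _ => step1 u)]
  rw [sum_symIdx (fun p : Fin m × Fin m => wgt ((a,b) : Fin m × Fin m) *
          (S i p.1 * T p.1 a * (S j p.2 * T p.2 b)
          + S i p.1 * T p.1 b * (S j p.2 * T p.2 a)
          + S j p.1 * T p.1 a * (S i p.2 * T p.2 b)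
          + S j p.1 * T p.1 b * (S i p.2 * T p.2 a))) (by intro p; simp only; ring)]
  have expand : ∑ p : Fin m × Fin m, (wgt ((a,b) : Fin m × Fin m) *
          (S i p.1 * T p.1 a * (S j p.2 * T p.2 b)
          + S i p.1 * T p.1 b * (S j p.2 * T p.2 a)
          + S j p.1 * T p.1 a * (S i p.2 * T p.2 b)
          + S j p.1 * T p.1 b * (S i p.2 * T p.2 a)))
      = wgt ((a,b) : Fin m × Fin m) *
          ((if i = a then (1:ℝ) else 0) * (if j = b then (1:ℝ) else 0)
          + (if i = b then (1:ℝ) else 0) * (if j = a then (1:ℝ) else 0)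
          + (if j = a then (1:ℝ) else 0) * (if i = b then (1:ℝ) else 0)
          + (if j = b then (1:ℝ) else 0) * (if i = a then (1:ℝ) else 0)) := by
    rw [← Finset.mul_sum]
    congr 1
    rw [Finset.sum_add_distrib, Finset.sum_add_distrib, Finset.sum_add_distrib,
      prod_factor (fun k => S i k * T k a) (fun l => S j l * T l b),
      prod_factor (fun k => S i k * T k b) (fun l => S j l * T l a),
      prod_factor (fun k => S j k * T k a) (fun l => S i l * T l b),
      prod_factor (fun k => S j k * T k b) (fun l => S i l * T l a),
      hST i a, hST j b, hST i b, hST j a]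
  rw [expand, delta_combine i j a b hji hba]
  simp [Matrix.one_apply, Subtype.ext_iff, Prod.ext_iff]

lemma swap24 {m : ℕ} (f : Fin m → Fin m → Fin m → Fin m → ℝ) :
    ∑ a, ∑ b, ∑ c, ∑ d, f a b c d = ∑ a, ∑ d, ∑ c, ∑ b, f a b c d := by
  apply Finset.sum_congr rfl; intro a _
  calc ∑ b, ∑ c, ∑ d, f a b c d
      = ∑ c, ∑ b, ∑ d, f a b c d := Finset.sum_comm
    _ = ∑ c, ∑ d, ∑ b, f a b c d := Finset.sum_congr rfl (fun c _ => Finset.sum_comm)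
    _ = ∑ d, ∑ c, ∑ b, f a b c d := Finset.sum_comm

lemma dot_formula {m : ℕ} (A B T : Matrix (Fin m) (Fin m) ℝ)
    (hA : A.IsSymm) (hB : B.IsSymm) (hT : T.IsSymm) :
    vech A ⬝ᵥ (Nmat T).mulVec (vech B) = (1/2) * (A * T * B * T).trace := by
  classical
  have inner : ∀ s : SymIdx m, (Nmat T).mulVec (vech B) s
      = wgt s.1 * ((1/2) * ∑ q : Fin m × Fin m,
          (T s.1.1 q.1 * T s.1.2 q.2 + T s.1.1 q.2 * T s.1.2 q.1) * B q.1 q.2) := by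
    intro s
    rw [Matrix.mulVec, dotProduct]
    have : ∀ t : SymIdx m, Nmat T s t * vech B t
        = wgt t.1 * (wgt s.1 *
            ((T s.1.1 t.1.1 * T s.1.2 t.1.2 + T s.1.1 t.1.2 * T s.1.2 t.1.1)
              * B t.1.1 t.1.2)) := by
      intro t; simp only [Nmat, vech]; ring
    rw [Finset.sum_congr rfl (fun t _ => this t)]
    rw [sum_symIdx (fun q : Fin m × Fin m => wgt s.1 *
          ((T s.1.1 q.1 * T s.1.2 q.2 + T s.1.1 q.2 * T s.1.2 q.1) * B q.1 q.2))
        (by intro p; simp only; rw [hB.apply p.1 p.2]; ring)]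
    rw [← Finset.mul_sum]
    ring
  rw [dotProduct]
  have step2 : ∀ s : SymIdx m, vech A s * (Nmat T).mulVec (vech B) s
      = wgt s.1 * (A s.1.1 s.1.2 * ((1/2) * ∑ q : Fin m × Fin m,
          (T s.1.1 q.1 * T s.1.2 q.2 + T s.1.1 q.2 * T s.1.2 q.1) * B q.1 q.2)) := by
    intro s; rw [inner s, vech]; ring
  rw [Finset.sum_congr rfl (fun s _ => step2 s)]
  rw [sum_symIdx (fun p : Fin m × Fin m => A p.1 p.2 * ((1/2) * ∑ q : Fin m × Fin m,
          (T p.1 q.1 * T p.2 q.2 + T p.1 q.2 * T p.2 q.1) * B q.1 q.2))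
      (by
        intro p; simp only
        rw [hA.apply p.1 p.2]
        congr 2
        apply Finset.sum_congr rfl; intro q _; ring)]
  have htr : (A * T * B * T).trace
      = ∑ x, ∑ y, ∑ z, ∑ u, A x u * T u z * B z y * T y x := by
    simp only [Matrix.trace, Matrix.diag_apply, Matrix.mul_apply, Finset.sum_mul]
  have r2 : (A * T * B * T).trace
      = ∑ x, ∑ u, ∑ z, ∑ y, A x u * T u z * B z y * T y x := by
    rw [htr]; exact swap24 _
  have r1 : (A * T * B * T).trace
      = ∑ u, ∑ x, ∑ z, ∑ y, A x u * T u z * B z y * T y x := by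
    rw [r2]; exact Finset.sum_comm
  have main : ∑ p : Fin m × Fin m, (A p.1 p.2 * ((1/2) * ∑ q : Fin m × Fin m,
          (T p.1 q.1 * T p.2 q.2 + T p.1 q.2 * T p.2 q.1) * B q.1 q.2))
      = (A * T * B * T).trace := by
    have expand : ∀ p : Fin m × Fin m, A p.1 p.2 * ((1/2) * ∑ q : Fin m × Fin m,
          (T p.1 q.1 * T p.2 q.2 + T p.1 q.2 * T p.2 q.1) * B q.1 q.2)
        = (1/2) * ∑ q : Fin m × Fin m,
            (A p.1 p.2 * (T p.1 q.1 * T p.2 q.2 * B q.1 q.2)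
            + A p.1 p.2 * (T p.1 q.2 * T p.2 q.1 * B q.1 q.2)) := by
      intro p
      rw [mul_left_comm, Finset.mul_sum]
      congr 1
      apply Finset.sum_congr rfl; intro q _; ring
    rw [Finset.sum_congr rfl (fun p _ => expand p), ← Finset.mul_sum]
    simp only [Finset.sum_add_distrib]
    have e1 : ∑ p : Fin m × Fin m, ∑ q : Fin m × Fin m,
          A p.1 p.2 * (T p.1 q.1 * T p.2 q.2 * B q.1 q.2)
        = (A * T * B * T).trace := by
      rw [r1]
      simp only [Fintype.sum_prod_type]
      apply Finset.sum_congr rfl; intro i _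
      apply Finset.sum_congr rfl; intro j _
      apply Finset.sum_congr rfl; intro k _
      apply Finset.sum_congr rfl; intro l _
      rw [hA.apply i j, hT.apply j l]
      ring
    have e2 : ∑ p : Fin m × Fin m, ∑ q : Fin m × Fin m,
          A p.1 p.2 * (T p.1 q.2 * T p.2 q.1 * B q.1 q.2)
        = (A * T * B * T).trace := by
      rw [r2]
      simp only [Fintype.sum_prod_type]
      apply Finset.sum_congr rfl; intro i _
      apply Finset.sum_congr rfl; intro j _
      apply Finset.sum_congr rfl; intro k _
      apply Finset.sum_congr rfl; intro l _
      rw [hT.apply i l]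
      ring
    rw [e1, e2]
    ring
  rw [main]

end Stmt15Aux

open Stmt15Aux

/-- **The key quadratic-form identity (Lemma `key`).**
If `XᵀX` is invertible and `A, B` are symmetric, then the
`m(m+1)/2 × m(m+1)/2` matrix `L_m(Xᵀ⊗Xᵀ)(I + K_n)(X⊗X)L_mᵀ` is invertible and
`vech(A)ᵀ [L_m(Xᵀ⊗Xᵀ)(I + K_n)(X⊗X)L_mᵀ]⁻¹ vech(B)
  = ½ Tr(A(XᵀX)⁻¹B(XᵀX)⁻¹)`. -/
theorem stmt15 (n m : ℕ) (hn : 1 ≤ n) (hm : 1 ≤ m)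
    (X : Matrix (Fin n) (Fin m) ℝ) (hX : IsUnit (Xᵀ * X).det)
    (A B : Matrix (Fin m) (Fin m) ℝ) (hA : A.IsSymm) (hB : B.IsSymm) :
    IsUnit (Lmat m * (Xᵀ ⊗ₖ Xᵀ) * (1 + Kmat n) * (X ⊗ₖ X) * (Lmat m)ᵀ).det
    ∧ vech A ⬝ᵥ (Lmat m * (Xᵀ ⊗ₖ Xᵀ) * (1 + Kmat n) * (X ⊗ₖ X) * (Lmat m)ᵀ)⁻¹.mulVec (vech B)
      = (1 / 2) * (A * (Xᵀ * X)⁻¹ * B * (Xᵀ * X)⁻¹).trace := by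
  classical
  set S : Matrix (Fin m) (Fin m) ℝ := Xᵀ * X with hSdef
  set T : Matrix (Fin m) (Fin m) ℝ := S⁻¹ with hTdef
  -- rewrite the big matrix through Mmat
  have hassoc : Lmat m * (Xᵀ ⊗ₖ Xᵀ) * (1 + Kmat n) * (X ⊗ₖ X) * (Lmat m)ᵀ
      = Lmat m * ((Xᵀ ⊗ₖ Xᵀ) * (1 + Kmat n) * (X ⊗ₖ X)) * (Lmat m)ᵀ := by
    rw [Matrix.mul_assoc (Lmat m) _ _, Matrix.mul_assoc (Lmat m) _ _]
  have hM : Lmat m * (Xᵀ ⊗ₖ Xᵀ) * (1 + Kmat n) * (X ⊗ₖ X) * (Lmat m)ᵀ = Mmat S := by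
    rw [hassoc]
    ext s t
    rw [LQL_apply]
    rw [Q_apply]
    rfl
  have hST : ∀ i a : Fin m, ∑ k, S i k * T k a = if i = a then 1 else 0 := by
    intro i a
    have h := Matrix.mul_nonsing_inv S hX
    calc ∑ k, S i k * T k a = (S * T) i a := (Matrix.mul_apply).symm
      _ = (1 : Matrix (Fin m) (Fin m) ℝ) i a := by rw [hTdef, h]
      _ = if i = a then 1 else 0 := Matrix.one_apply
  have h1 : Mmat S * Nmat T = 1 := MN_eq_one S T hST
  have hTsymm : T.IsSymm := by
    have hSsymm : S.IsSymm := by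
      rw [Matrix.IsSymm, hSdef, Matrix.transpose_mul, Matrix.transpose_transpose]
    rw [Matrix.IsSymm, hTdef, Matrix.transpose_nonsing_inv, hSsymm]
  constructor
  · rw [hM]
    exact Matrix.isUnit_det_of_right_inverse h1
  · rw [hM, Matrix.inv_eq_right_inv h1]
    exact dot_formula A B T hA hB hTsymm

end
end

section
/- Let m ≥ 1 be an integer and A ⊆ {1,…,m}. Define κ_A = 1{A = ∅} + Σ_{∅ ≠ S ⊆ {1,…,m}} (−1)^{|S|} · |{ (T, R) : T ⊊ S, R ⊆ {1,…,m}∖S, R ∪ T = A }|. Then κ_A = 0 for every A ⊆ {1,…,m}. -/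
open Finset

lemma stmt18_count {m : ℕ} (A S : Finset (Fin m)) :
    (((S.powerset ×ˢ ((Finset.univ : Finset (Fin m)) \ S).powerset).filter
        (fun p => p.1 ⊂ S ∧ p.2 ∪ p.1 = A)).card)
      = if S ⊆ A then 0 else 1 := by
  split_ifs with h
  · rw [card_eq_zero, filter_eq_empty_iff]
    rintro ⟨T, R⟩ hp ⟨hTS, hRT⟩
    simp only [mem_product, mem_powerset] at hp
    obtain ⟨hT, hR⟩ := hp
    refine hTS.2 (fun x hx => ?_)
    have hxA : x ∈ A := h hx
    rw [← hRT] at hxA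
    rcases mem_union.mp hxA with h1 | h2
    · have := hR h1; simp only [mem_sdiff] at this; exact absurd hx this.2
    · exact h2
  · rw [card_eq_one]
    refine ⟨(A ∩ S, A \ S), eq_singleton_iff_unique_mem.mpr ⟨?_, ?_⟩⟩
    · simp only [mem_filter, mem_product, mem_powerset]
      refine ⟨⟨inter_subset_right, sdiff_subset_sdiff (subset_univ A) le_rfl⟩, ?_, ?_⟩
      · refine ⟨inter_subset_right, fun hST => h ?_⟩
        exact fun x hx => (mem_inter.mp (hST hx)).1
      · exact sdiff_union_inter A S
    · rintro ⟨T, R⟩ hp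
      simp only [mem_filter, mem_product, mem_powerset] at hp
      obtain ⟨⟨hT, hR⟩, hTS, hRT⟩ := hp
      have hT' : T = A ∩ S := by
        ext x
        simp only [mem_inter]
        constructor
        · intro hx; exact ⟨hRT ▸ mem_union_right _ hx, hT hx⟩
        · rintro ⟨hxA, hxS⟩
          rw [← hRT] at hxA
          rcases mem_union.mp hxA with h1 | h2
          · have := hR h1; simp only [mem_sdiff] at this; exact absurd hxS this.2
          · exact h2
      have hR' : R = A \ S := by
        ext x
        simp only [mem_sdiff]
        constructor
        · intro hx
          have := hR hx; simp only [mem_sdiff] at this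
          exact ⟨hRT ▸ mem_union_left _ hx, this.2⟩
        · rintro ⟨hxA, hxS⟩
          rw [← hRT] at hxA
          rcases mem_union.mp hxA with h1 | h2
          · exact h1
          · exact absurd (hT h2) hxS
      simp [hT', hR']

/-- **Vanishing of the coefficients `κ_A` (key combinatorial step of Theorem 1).**
For `m ≥ 1` and `A ⊆ {1,…,m}`,
`κ_A = 1{A = ∅} + ∑_{∅ ≠ S ⊆ {1,…,m}} (-1)^{|S|} · #{(T,R) : T ⊊ S, R ⊆ {1,…,m}\S, R ∪ T = A}`
equals `0`. -/
theorem stmt18 (m : ℕ) (hm : 1 ≤ m) (A : Finset (Fin m)) :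
    ((if A = ∅ then 1 else 0) : ℤ)
      + ∑ S ∈ (Finset.univ : Finset (Fin m)).powerset.filter (fun S => S ≠ ∅),
          (-1 : ℤ) ^ S.card *
            ((((S.powerset ×ˢ ((Finset.univ : Finset (Fin m)) \ S).powerset).filter
                (fun p => p.1 ⊂ S ∧ p.2 ∪ p.1 = A)).card : ℤ))
    = 0 := by
  have key : ∀ S : Finset (Fin m),
      (-1 : ℤ) ^ S.card *
          ((((S.powerset ×ˢ ((Finset.univ : Finset (Fin m)) \ S).powerset).filter
              (fun p => p.1 ⊂ S ∧ p.2 ∪ p.1 = A)).card : ℤ))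
        = (-1 : ℤ) ^ S.card - (if S ⊆ A then (-1 : ℤ) ^ S.card else 0) := by
    intro S
    rw [stmt18_count A S]
    split_ifs <;> push_cast <;> ring
  rw [Finset.sum_congr rfl (fun S _ => key S)]
  rw [Finset.sum_filter]
  have drop : ∀ S ∈ (Finset.univ : Finset (Fin m)).powerset,
      (if S ≠ ∅ then (-1 : ℤ) ^ S.card - (if S ⊆ A then (-1 : ℤ) ^ S.card else 0) else 0)
        = (-1 : ℤ) ^ S.card - (if S ⊆ A then (-1 : ℤ) ^ S.card else 0) := by
    intro S _
    by_cases hS : S = ∅ <;> simp [hS]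
  rw [Finset.sum_congr rfl drop, Finset.sum_sub_distrib]
  rw [Finset.sum_powerset_neg_one_pow_card]
  have huniv : (Finset.univ : Finset (Fin m)) ≠ ∅ := by
    simp [Finset.univ_eq_empty_iff, Fin.pos_iff_nonempty.mp hm]
  rw [if_neg huniv]
  have hfil : ((Finset.univ : Finset (Fin m)).powerset.filter (fun S => S ⊆ A)) = A.powerset := by
    ext S
    simp [Finset.mem_filter, Finset.mem_powerset]
  rw [← Finset.sum_filter, hfil, Finset.sum_powerset_neg_one_pow_card]
  by_cases hA : A = ∅ <;> simp [hA]
end
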